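/- arXiv:2505.21257 — 4 statements merged into one kernel-verified Lean document; each statement's English description precedes it below -/
import Mathlib

section
/- Let 2 ≤ k ≤ m and d ≥ 1 be integers, let K > 0, and let X ⊆ ℝ^m be a nonempty set of the form X = X_1 ∪ … ∪ X_L, where each X_i is a compact set contained in some affine subspace of ℝ^m of dimension m−k. Let ρ : ℝ^m ∖ X → ℝ^d be differentiable and satisfy ‖Dρ(z)‖ ≤ K / dist(z, X) for every z ∈ ℝ^m ∖ X, where ‖Dρ(z)‖ is the operator norm of the Fréchet derivative. Then for every R > 0 there exists a constant C > 0, depending only on m, k, K, R and X (but not on p), such that for every real p with k−1 < p < k one has (k−p) · ∫_{B(0,R) ∖ X} ‖Dρ(z)‖^p dz ≤ C, the integral being with respect to Lebesgue measure on ℝ^m. -/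
open MeasureTheory Metric Set Module

local notation "⟪" x ", " y "⟫" => @inner ℝ _ _ x y

lemma card_filter_lt (m k : ℕ) (hkm : k ≤ m) :
    (Finset.univ.filter (fun j : Fin m => (j : ℕ) < k)).card = k := by
  rw [← Fintype.card_subtype]
  have e : {j : Fin m // (j : ℕ) < k} ≃ Fin k :=
    { toFun := fun j => ⟨j.1.1, j.2⟩
      invFun := fun x => ⟨⟨x.1, x.2.trans_le hkm⟩, x.2⟩
      left_inv := fun j => Subtype.ext (Fin.ext rfl)
      right_inv := fun x => Fin.ext rfl }
  rw [Fintype.card_congr e, Fintype.card_fin]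

lemma tube_vol (m k : ℕ) (hkm : k ≤ m) (R : ℝ) (hR : 0 < R)
    (T : Set (EuclideanSpace ℝ (Fin m))) (A : AffineSubspace ℝ (EuclideanSpace ℝ (Fin m)))
    (hdir : Module.finrank ℝ A.direction = m - k)
    (hsub : T ⊆ (A : Set (EuclideanSpace ℝ (Fin m)))) (hne : T.Nonempty)
    (s : ℝ) (hs : 0 < s) :
    volume {z : EuclideanSpace ℝ (Fin m) | z ∈ Metric.ball 0 R ∧ Metric.infDist z T < s}
      ≤ ENNReal.ofReal ((2*R)^(m-k) * (2*s)^k) := by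
  classical
  obtain ⟨a, haT⟩ := hne
  have haA : a ∈ A := hsub haT
  set W := A.direction with hW
  have hfr : finrank ℝ (EuclideanSpace ℝ (Fin m)) = m := finrank_euclideanSpace_fin
  have hWperp : finrank ℝ Wᗮ = k := by
    have h1 := Submodule.finrank_add_finrank_orthogonal (K := W)
    rw [hdir, hfr] at h1
    omega
  set o : OrthonormalBasis (Fin k) ℝ Wᗮ :=
    (stdOrthonormalBasis ℝ Wᗮ).reindex (finCongr hWperp) with ho
  set v : Fin m → EuclideanSpace ℝ (Fin m) := fun j => if h : (j : ℕ) < k then (o ⟨j, h⟩ : EuclideanSpace ℝ (Fin m)) else 0 with hv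
  set sset : Set (Fin m) := {j | (j : ℕ) < k} with hsset
  have hon : Orthonormal ℝ (sset.restrict v) := by
    have heq : sset.restrict v
        = (Wᗮ.subtypeₗᵢ ∘ o) ∘ (fun jh : sset => (⟨jh.1, jh.2⟩ : Fin k)) := by
      funext jh
      show v jh.1 = _
      rw [hv]
      exact dif_pos jh.2
    rw [heq]
    refine Orthonormal.comp (o.orthonormal.comp_linearIsometry _) _ ?_
    intro x y hxy
    simp only [Fin.mk.injEq] at hxy
    exact Subtype.ext (Fin.ext hxy)
  obtain ⟨b, hb⟩ := hon.exists_orthonormalBasis_extension_of_card_eq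
    (by simp [hfr]) (v := v)
  -- key: for j with j < k, b j is orthogonal to W
  have hborth : ∀ j : Fin m, (hj : (j : ℕ) < k) → ∀ w ∈ W, ⟪b j, w⟫ = 0 := by
    intro j hj w hw
    rw [hb j hj]
    simp only [hv, dif_pos hj]
    exact Submodule.inner_left_of_mem_orthogonal hw (SetLike.coe_mem _)
  set c : Fin m → ℝ := fun j => if (j : ℕ) < k then ⟪b j, a⟫ else 0 with hc
  set r : Fin m → ℝ := fun j => if (j : ℕ) < k then s else R with hr
  set Φ := (MeasurableEquiv.toLp 2 (Fin m → ℝ)).symm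
  have hincl : {z : EuclideanSpace ℝ (Fin m) | z ∈ Metric.ball 0 R ∧ Metric.infDist z T < s}
      ⊆ (Φ ∘ b.repr) ⁻¹' (Set.univ.pi fun j => Ioo (c j - r j) (c j + r j)) := by
    rintro z ⟨hzR, hzd⟩
    obtain ⟨w, hwT, hw⟩ := (Metric.infDist_lt_iff ⟨a, haT⟩).mp hzd
    intro j _
    have hrepr : (Φ (b.repr z)) j = ⟪b j, z⟫ := by
      rw [← b.repr_apply_apply]; rfl
    simp only [Set.mem_Ioo, Function.comp_apply, hrepr]
    rw [show (c j - r j < ⟪b j, z⟫ ∧ ⟪b j, z⟫ < c j + r j) ↔ |⟪b j, z⟫ - c j| < r j by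
      rw [abs_lt]; constructor <;> (rintro ⟨h1, h2⟩; constructor <;> linarith)]
    by_cases hj : (j : ℕ) < k
    · have hcj : c j = ⟪b j, a⟫ := by simp [hc, hj]
      have hrj : r j = s := by simp [hr, hj]
      have hwa : w - a ∈ W := AffineSubspace.vsub_mem_direction (hsub hwT) haA
      have : ⟪b j, z⟫ - c j = ⟪b j, z - w⟫ := by
        rw [hcj, ← inner_sub_right]
        have : z - a = (z - w) + (w - a) := by abel
        rw [this, inner_add_right, hborth j hj _ hwa, add_zero]
      rw [this, hrj]
      calc |⟪b j, z - w⟫| ≤ ‖b j‖ * ‖z - w‖ := abs_real_inner_le_norm _ _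
        _ = ‖z - w‖ := by rw [b.orthonormal.1 j, one_mul]
        _ < s := by rwa [← dist_eq_norm]
    · have hcj : c j = 0 := by simp [hc, hj]
      have hrj : r j = R := by simp [hr, hj]
      rw [hcj, sub_zero, hrj]
      calc |⟪b j, z⟫| ≤ ‖b j‖ * ‖z‖ := abs_real_inner_le_norm _ _
        _ = ‖z‖ := by rw [b.orthonormal.1 j, one_mul]
        _ < R := by rwa [mem_ball, dist_zero_right] at hzR
  calc volume {z : EuclideanSpace ℝ (Fin m) | z ∈ Metric.ball 0 R ∧ Metric.infDist z T < s}
      ≤ volume ((Φ ∘ b.repr) ⁻¹' (Set.univ.pi fun j => Ioo (c j - r j) (c j + r j))) :=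
        measure_mono hincl
    _ = volume (Set.univ.pi fun j => Ioo (c j - r j) (c j + r j)) := by
        refine ((EuclideanSpace.volume_preserving_symm_measurableEquiv_toLp (Fin m)).comp
          b.measurePreserving_repr).measure_preimage ?_
        exact (MeasurableSet.univ_pi fun j => measurableSet_Ioo).nullMeasurableSet
    _ = ∏ j : Fin m, volume (Ioo (c j - r j) (c j + r j)) := volume_pi_pi _
    _ = ∏ j : Fin m, ENNReal.ofReal (2 * r j) := by
        refine Finset.prod_congr rfl fun j _ => ?_
        rw [Real.volume_Ioo]
        congr 1
        ring
    _ = ENNReal.ofReal (2*s) ^ k * ENNReal.ofReal (2*R) ^ (m - k) := by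
        have : ∀ j : Fin m, ENNReal.ofReal (2 * r j)
            = if (j : ℕ) < k then ENNReal.ofReal (2*s) else ENNReal.ofReal (2*R) := by
          intro j
          by_cases hj : (j : ℕ) < k <;> simp [hr, hj]
        rw [Finset.prod_congr rfl fun j _ => this j, Finset.prod_ite,
          Finset.prod_const, Finset.prod_const, card_filter_lt m k hkm]
        congr 2
        rw [Finset.filter_not, Finset.card_sdiff_of_subset (Finset.filter_subset _ _),
          Finset.card_univ, Fintype.card_fin, card_filter_lt m k hkm]
    _ = ENNReal.ofReal ((2*R)^(m-k) * (2*s)^k) := by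
        rw [← ENNReal.ofReal_pow (by linarith), ← ENNReal.ofReal_pow (by linarith),
          ← ENNReal.ofReal_mul (by positivity), mul_comm]

lemma piece_bound (m k : ℕ) (hkm : k ≤ m) (R : ℝ) (hR : 0 < R)
    (T : Set (EuclideanSpace ℝ (Fin m))) (A : AffineSubspace ℝ (EuclideanSpace ℝ (Fin m)))
    (hdir : Module.finrank ℝ A.direction = m - k)
    (hsub : T ⊆ (A : Set (EuclideanSpace ℝ (Fin m)))) (hne : T.Nonempty)
    (p : ℝ) (hp0 : 0 < p) (hpk : p < k) :
    ∫⁻ z in Metric.ball (0 : EuclideanSpace ℝ (Fin m)) R,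
        ENNReal.ofReal ((Metric.infDist z T) ^ (-p))
      ≤ volume (Metric.ball (0 : EuclideanSpace ℝ (Fin m)) R)
        + ENNReal.ofReal ((2*R)^(m-k) * 2^k * (p/((k:ℝ)-p))) := by
  have hk0 : (0:ℝ) < k := lt_trans hp0 hpk
  have f_mble : Measurable fun z : EuclideanSpace ℝ (Fin m) => (Metric.infDist z T) ^ (-p) :=
    (continuous_infDist_pt T).measurable.pow measurable_const
  rw [lintegral_eq_lintegral_meas_lt _
    (Filter.Eventually.of_forall fun z => Real.rpow_nonneg Metric.infDist_nonneg _)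
    f_mble.aemeasurable]
  have hsplit : Ioi (0:ℝ) = Ioc 0 1 ∪ Ioi 1 := (Set.Ioc_union_Ioi_eq_Ioi zero_le_one).symm
  rw [hsplit, lintegral_union measurableSet_Ioi (Set.Ioc_disjoint_Ioi le_rfl)]
  have part1 : ∫⁻ t in Ioc (0:ℝ) 1,
      (volume.restrict (Metric.ball (0 : EuclideanSpace ℝ (Fin m)) R))
        {z | t < (Metric.infDist z T) ^ (-p)}
      ≤ volume (Metric.ball (0 : EuclideanSpace ℝ (Fin m)) R) := by
    calc ∫⁻ t in Ioc (0:ℝ) 1, (volume.restrict (Metric.ball (0 : EuclideanSpace ℝ (Fin m)) R))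
          {z | t < (Metric.infDist z T) ^ (-p)}
        ≤ ∫⁻ _ in Ioc (0:ℝ) 1, volume (Metric.ball (0 : EuclideanSpace ℝ (Fin m)) R) := by
          refine lintegral_mono fun t => ?_
          calc (volume.restrict (Metric.ball (0 : EuclideanSpace ℝ (Fin m)) R))
                {z | t < (Metric.infDist z T) ^ (-p)}
              ≤ (volume.restrict (Metric.ball (0 : EuclideanSpace ℝ (Fin m)) R)) univ :=
                measure_mono (subset_univ _)
            _ = volume (Metric.ball (0 : EuclideanSpace ℝ (Fin m)) R) :=
                Measure.restrict_apply_univ _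
      _ = volume (Metric.ball (0 : EuclideanSpace ℝ (Fin m)) R) := by
          rw [setLIntegral_const, Real.volume_Ioc]
          norm_num
  have part2 : ∫⁻ t in Ioi (1:ℝ),
      (volume.restrict (Metric.ball (0 : EuclideanSpace ℝ (Fin m)) R))
        {z | t < (Metric.infDist z T) ^ (-p)}
      ≤ ENNReal.ofReal ((2*R)^(m-k) * 2^k * (p/((k:ℝ)-p))) := by
    have hC2 : (0:ℝ) ≤ (2*R)^(m-k) * 2^k := by positivity
    have step1 : ∀ t ∈ Ioi (1:ℝ),
        (volume.restrict (Metric.ball (0 : EuclideanSpace ℝ (Fin m)) R))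
          {z | t < (Metric.infDist z T) ^ (-p)}
        ≤ ENNReal.ofReal ((2*R)^(m-k) * 2^k * t ^ (-((k:ℝ)/p))) := by
      intro t ht
      have ht1 : (1:ℝ) < t := ht
      have ht0 : (0:ℝ) < t := lt_trans one_pos ht1
      have hset : MeasurableSet {z : EuclideanSpace ℝ (Fin m) | t < (Metric.infDist z T) ^ (-p)} :=
        measurableSet_lt measurable_const f_mble
      rw [Measure.restrict_apply hset]
      have hs0 : (0:ℝ) < t ^ (-(1/p)) := Real.rpow_pos_of_pos ht0 _
      have hsubset : {z : EuclideanSpace ℝ (Fin m) | t < (Metric.infDist z T) ^ (-p)}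
          ∩ Metric.ball 0 R
          ⊆ {z : EuclideanSpace ℝ (Fin m) | z ∈ Metric.ball 0 R
              ∧ Metric.infDist z T < t ^ (-(1/p))} := by
        rintro z ⟨hz1, hz2⟩
        refine ⟨hz2, ?_⟩
        have hz1' : t < (Metric.infDist z T) ^ (-p) := hz1
        have hd0 : 0 < Metric.infDist z T := by
          rcases eq_or_lt_of_le (Metric.infDist_nonneg (s := T) (x := z)) with h | h
          · exfalso
            rw [← h, Real.zero_rpow (neg_ne_zero.mpr hp0.ne')] at hz1'
            exact absurd (lt_trans ht0 hz1') (lt_irrefl 0)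
          · exact h
        have h1 : ((Metric.infDist z T) ^ (-p)) ^ (-(1/p)) < t ^ (-(1/p)) :=
          Real.rpow_lt_rpow_of_neg ht0 hz1' (neg_lt_zero.mpr (by positivity))
        have h2 : ((Metric.infDist z T) ^ (-p)) ^ (-(1/p)) = Metric.infDist z T := by
          rw [← Real.rpow_mul hd0.le, show (-p) * (-(1/p)) = 1 by field_simp, Real.rpow_one]
        show Metric.infDist z T < t ^ (-(1/p))
        rw [← h2]; exact h1
      calc volume ({z : EuclideanSpace ℝ (Fin m) | t < (Metric.infDist z T) ^ (-p)}
            ∩ Metric.ball 0 R)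
          ≤ volume {z : EuclideanSpace ℝ (Fin m) | z ∈ Metric.ball 0 R
              ∧ Metric.infDist z T < t ^ (-(1/p))} := measure_mono hsubset
        _ ≤ ENNReal.ofReal ((2*R)^(m-k) * (2 * t ^ (-(1/p)))^k) :=
            tube_vol m k hkm R hR T A hdir hsub hne _ hs0
        _ = ENNReal.ofReal ((2*R)^(m-k) * 2^k * t ^ (-((k:ℝ)/p))) := by
            congr 1
            have hpk2 : (2 * t ^ (-(1/p)))^k = 2^k * t ^ (-((k:ℝ)/p)) := by
              rw [mul_pow, ← Real.rpow_natCast (t ^ (-(1/p))) k, ← Real.rpow_mul ht0.le]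
              congr 1
              push_cast
              ring
            rw [hpk2]
            ring
    have hexp : -((k:ℝ)/p) < -1 := by
      rw [neg_lt_neg_iff]
      exact (one_lt_div hp0).mpr hpk
    calc ∫⁻ t in Ioi (1:ℝ), (volume.restrict (Metric.ball (0 : EuclideanSpace ℝ (Fin m)) R))
          {z | t < (Metric.infDist z T) ^ (-p)}
        ≤ ∫⁻ t in Ioi (1:ℝ), ENNReal.ofReal ((2*R)^(m-k) * 2^k * t ^ (-((k:ℝ)/p))) :=
          setLIntegral_mono' measurableSet_Ioi step1
      _ = ENNReal.ofReal ((2*R)^(m-k) * 2^k)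
            * ∫⁻ t in Ioi (1:ℝ), ENNReal.ofReal (t ^ (-((k:ℝ)/p))) := by
          rw [← lintegral_const_mul' _ _ ENNReal.ofReal_ne_top]
          refine setLIntegral_congr_fun measurableSet_Ioi
            (fun t ht => ?_)
          rw [← ENNReal.ofReal_mul hC2]
      _ = ENNReal.ofReal ((2*R)^(m-k) * 2^k)
            * ENNReal.ofReal (∫ t in Ioi (1:ℝ), t ^ (-((k:ℝ)/p))) := by
          rw [ofReal_integral_eq_lintegral_ofReal
            (integrableOn_Ioi_rpow_of_lt hexp one_pos)
            ((ae_restrict_iff' measurableSet_Ioi).mpr (Filter.Eventually.of_forall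
              fun t ht => Real.rpow_nonneg (le_of_lt (lt_trans one_pos ht)) _))]
      _ = ENNReal.ofReal ((2*R)^(m-k) * 2^k) * ENNReal.ofReal (p/((k:ℝ)-p)) := by
          rw [integral_Ioi_rpow_of_lt hexp one_pos, Real.one_rpow]
          congr 1
          have hkp : (k:ℝ) - p ≠ 0 := sub_ne_zero.mpr hpk.ne'
          have hden : -((k:ℝ)/p) + 1 ≠ 0 := by
            have hh : -((k:ℝ)/p) + 1 = (p - (k:ℝ))/p := by rw [sub_div, div_self hp0.ne']; ring
            rw [hh]
            exact div_ne_zero (by linarith) hp0.ne'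
          congr 1
          rw [div_eq_div_iff hden hkp]
          field_simp [hp0.ne']
          ring
      _ = ENNReal.ofReal ((2*R)^(m-k) * 2^k * (p/((k:ℝ)-p))) := by
          rw [← ENNReal.ofReal_mul hC2]
  exact add_le_add part1 part2

/-- Uniform bound, as `p → k⁻`, on `(k-p)` times the `p`-energy of a retraction-type map
whose gradient blows up like the inverse distance to a finite union of compact pieces of
`(m-k)`-dimensional affine subspaces. -/
theorem stmt0 (m k d : ℕ) (hk2 : 2 ≤ k) (hkm : k ≤ m) (hd : 1 ≤ d)
    (K : ℝ) (hK : 0 < K)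
    (L : ℕ) (Xs : Fin L → Set (EuclideanSpace ℝ (Fin m)))
    (X : Set (EuclideanSpace ℝ (Fin m))) (hXne : X.Nonempty)
    (hXunion : X = ⋃ i, Xs i)
    (hXcomp : ∀ i, IsCompact (Xs i))
    (hXaff : ∀ i, ∃ A : AffineSubspace ℝ (EuclideanSpace ℝ (Fin m)),
      Module.finrank ℝ A.direction = m - k ∧ Xs i ⊆ (A : Set (EuclideanSpace ℝ (Fin m))))
    (ρ : EuclideanSpace ℝ (Fin m) → EuclideanSpace ℝ (Fin d))
    (hdiff : ∀ z ∉ X, DifferentiableAt ℝ ρ z)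
    (hbound : ∀ z ∉ X, ‖fderiv ℝ ρ z‖ ≤ K / Metric.infDist z X) :
    ∀ R > 0, ∃ C > 0, ∀ p : ℝ, (k : ℝ) - 1 < p → p < k →
      ENNReal.ofReal ((k : ℝ) - p) *
        ∫⁻ z in Metric.ball (0 : EuclideanSpace ℝ (Fin m)) R \ X,
          ENNReal.ofReal (‖fderiv ℝ ρ z‖ ^ p)
      ≤ ENNReal.ofReal C := by
  have hXcompact : IsCompact X := hXunion ▸ isCompact_iUnion hXcomp
  have hXclosed : IsClosed X := hXcompact.isClosed
  have hk2' : (2:ℝ) ≤ (k:ℝ) := by exact_mod_cast hk2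
  intro R hR
  set V : ℝ := (volume (Metric.ball (0 : EuclideanSpace ℝ (Fin m)) R)).toReal with hV_def
  set C2 : ℝ := (2*R)^(m-k) * 2^k with hC2_def
  set M : ℝ := max (K ^ (k:ℝ)) (K ^ ((k:ℝ)-1)) with hM_def
  have hV : 0 ≤ V := ENNReal.toReal_nonneg
  have hC2 : 0 < C2 := by positivity
  have hM : 0 < M := lt_of_lt_of_le (Real.rpow_pos_of_pos hK _) (le_max_left _ _)
  set C : ℝ := L * (M * (V + C2 * k)) + 1 with hC_def
  have hC : 0 < C := by positivity
  refine ⟨C, hC, ?_⟩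
  intro p hp1 hpk'
  have hp0 : 0 < p := by linarith
  have hkp0 : 0 < (k:ℝ) - p := by linarith
  have hkp1 : (k:ℝ) - p ≤ 1 := by linarith
  have hvolball : volume (Metric.ball (0 : EuclideanSpace ℝ (Fin m)) R)
      = ENNReal.ofReal V := (ENNReal.ofReal_toReal (measure_ball_lt_top).ne).symm
  -- per-piece bound
  have key : ∀ i : Fin L,
      ENNReal.ofReal ((k:ℝ) - p) * ∫⁻ z in Metric.ball (0 : EuclideanSpace ℝ (Fin m)) R,
        ENNReal.ofReal ((Metric.infDist z (Xs i)) ^ (-p))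
      ≤ ENNReal.ofReal (V + C2 * k) := by
    intro i
    rcases Set.eq_empty_or_nonempty (Xs i) with he | hne
    · have : ∀ z : EuclideanSpace ℝ (Fin m),
          ENNReal.ofReal ((Metric.infDist z (Xs i)) ^ (-p)) = 0 := by
        intro z
        rw [he, Metric.infDist_empty, Real.zero_rpow (neg_ne_zero.mpr hp0.ne')]
        simp
      rw [lintegral_congr this, lintegral_zero, mul_zero]
      exact zero_le
    · obtain ⟨A, hdir, hsub⟩ := hXaff i
      calc ENNReal.ofReal ((k:ℝ) - p) * ∫⁻ z in Metric.ball (0 : EuclideanSpace ℝ (Fin m)) R,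
            ENNReal.ofReal ((Metric.infDist z (Xs i)) ^ (-p))
          ≤ ENNReal.ofReal ((k:ℝ) - p) *
              (volume (Metric.ball (0 : EuclideanSpace ℝ (Fin m)) R)
               + ENNReal.ofReal (C2 * (p/((k:ℝ)-p)))) := by
            refine mul_le_mul_right ?_ _
            have := piece_bound m k hkm R hR (Xs i) A hdir hsub hne p hp0 hpk'
            rw [hC2_def]
            exact this
        _ = ENNReal.ofReal ((k:ℝ) - p) * volume (Metric.ball (0 : EuclideanSpace ℝ (Fin m)) R)
            + ENNReal.ofReal (((k:ℝ) - p) * (C2 * (p/((k:ℝ)-p)))) := by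
            rw [mul_add, ← ENNReal.ofReal_mul hkp0.le]
        _ ≤ 1 * volume (Metric.ball (0 : EuclideanSpace ℝ (Fin m)) R)
            + ENNReal.ofReal (C2 * k) := by
            refine add_le_add (mul_le_mul_left (ENNReal.ofReal_le_one.mpr hkp1) _)
              (ENNReal.ofReal_le_ofReal ?_)
            have heq : ((k:ℝ) - p) * (C2 * (p/((k:ℝ)-p))) = C2 * p := by
              field_simp
            rw [heq]
            exact mul_le_mul_of_nonneg_left hpk'.le hC2.le
        _ = ENNReal.ofReal (V + C2 * k) := by
            rw [one_mul, hvolball, ← ENNReal.ofReal_add hV (by positivity)]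
  -- pointwise bound
  set g : Fin L → EuclideanSpace ℝ (Fin m) → ENNReal :=
    fun i z => ENNReal.ofReal (M * (Metric.infDist z (Xs i)) ^ (-p)) with hg_def
  have g_mble : ∀ i, Measurable (g i) := by
    intro i
    exact (((continuous_infDist_pt (Xs i)).measurable.pow measurable_const).const_mul
      M).ennreal_ofReal
  have ptw : ∀ z ∈ Metric.ball (0 : EuclideanSpace ℝ (Fin m)) R \ X,
      ENNReal.ofReal (‖fderiv ℝ ρ z‖ ^ p) ≤ ∑ i : Fin L, g i z := by
    intro z hz
    have hzX : z ∉ X := hz.2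
    obtain ⟨y, hyX, hy⟩ := hXcompact.exists_infDist_eq_dist hXne z
    obtain ⟨i, hyi⟩ : ∃ i, y ∈ Xs i := by
      rw [hXunion] at hyX
      exact Set.mem_iUnion.mp hyX
    have hdi_le : Metric.infDist z (Xs i) ≤ Metric.infDist z X := by
      rw [hy]
      exact Metric.infDist_le_dist_of_mem hyi
    have hdi0 : 0 < Metric.infDist z (Xs i) := by
      refine ((hXcomp i).isClosed.notMem_iff_infDist_pos ⟨y, hyi⟩).mp ?_
      intro hmem
      exact hzX (hXunion ▸ Set.mem_iUnion.mpr ⟨i, hmem⟩)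
    have h1 : ‖fderiv ℝ ρ z‖ ^ p ≤ (K / Metric.infDist z X) ^ p :=
      Real.rpow_le_rpow (norm_nonneg _) (hbound z hzX) hp0.le
    have h2 : (K / Metric.infDist z X) ^ p
        = K ^ p * (Metric.infDist z X) ^ (-p) := by
      rw [Real.div_rpow hK.le Metric.infDist_nonneg, Real.rpow_neg Metric.infDist_nonneg,
        div_eq_mul_inv]
    have h3 : K ^ p ≤ M := by
      rcases le_total 1 K with h | h
      · exact le_max_of_le_left (Real.rpow_le_rpow_of_exponent_le h hpk'.le)
      · exact le_max_of_le_right (Real.rpow_le_rpow_of_exponent_ge hK h hp1.le)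
    have h4 : (Metric.infDist z X) ^ (-p) ≤ (Metric.infDist z (Xs i)) ^ (-p) :=
      Real.rpow_le_rpow_of_nonpos hdi0 hdi_le (neg_nonpos.mpr hp0.le)
    have h5 : ‖fderiv ℝ ρ z‖ ^ p ≤ M * (Metric.infDist z (Xs i)) ^ (-p) := by
      calc ‖fderiv ℝ ρ z‖ ^ p ≤ K ^ p * (Metric.infDist z X) ^ (-p) := h2 ▸ h1
        _ ≤ M * (Metric.infDist z (Xs i)) ^ (-p) :=
            mul_le_mul h3 h4 (Real.rpow_nonneg Metric.infDist_nonneg _) hM.le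
    calc ENNReal.ofReal (‖fderiv ℝ ρ z‖ ^ p) ≤ g i z := ENNReal.ofReal_le_ofReal h5
      _ ≤ ∑ j : Fin L, g j z :=
          Finset.single_le_sum (f := fun j => g j z) (fun j _ => zero_le) (Finset.mem_univ i)
  have hBX : MeasurableSet (Metric.ball (0 : EuclideanSpace ℝ (Fin m)) R \ X) :=
    measurableSet_ball.diff hXclosed.measurableSet
  calc ENNReal.ofReal ((k:ℝ) - p) * ∫⁻ z in Metric.ball (0 : EuclideanSpace ℝ (Fin m)) R \ X,
        ENNReal.ofReal (‖fderiv ℝ ρ z‖ ^ p)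
      ≤ ENNReal.ofReal ((k:ℝ) - p) * ∫⁻ z in Metric.ball (0 : EuclideanSpace ℝ (Fin m)) R \ X,
          ∑ i : Fin L, g i z :=
        mul_le_mul_right (setLIntegral_mono' hBX ptw) _
    _ = ENNReal.ofReal ((k:ℝ) - p) * ∑ i : Fin L,
          ∫⁻ z in Metric.ball (0 : EuclideanSpace ℝ (Fin m)) R \ X, g i z := by
        rw [lintegral_finset_sum _ (fun i _ => g_mble i)]
    _ ≤ ENNReal.ofReal ((k:ℝ) - p) * ∑ i : Fin L,
          ∫⁻ z in Metric.ball (0 : EuclideanSpace ℝ (Fin m)) R, g i z := by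
        refine mul_le_mul_right (Finset.sum_le_sum fun i _ => ?_) _
        exact lintegral_mono' (Measure.restrict_mono Set.diff_subset le_rfl) le_rfl
    _ = ∑ i : Fin L, ENNReal.ofReal M * (ENNReal.ofReal ((k:ℝ) - p) *
          ∫⁻ z in Metric.ball (0 : EuclideanSpace ℝ (Fin m)) R,
            ENNReal.ofReal ((Metric.infDist z (Xs i)) ^ (-p))) := by
        rw [Finset.mul_sum]
        refine Finset.sum_congr rfl fun i _ => ?_
        have : ∫⁻ z in Metric.ball (0 : EuclideanSpace ℝ (Fin m)) R, g i z
            = ENNReal.ofReal M * ∫⁻ z in Metric.ball (0 : EuclideanSpace ℝ (Fin m)) R,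
              ENNReal.ofReal ((Metric.infDist z (Xs i)) ^ (-p)) := by
          rw [← lintegral_const_mul' _ _ ENNReal.ofReal_ne_top]
          exact lintegral_congr fun z => ENNReal.ofReal_mul hM.le
        rw [this]
        ring
    _ ≤ ∑ _i : Fin L, ENNReal.ofReal M * ENNReal.ofReal (V + C2 * k) :=
        Finset.sum_le_sum fun i _ => mul_le_mul_right (key i) _
    _ = (L : ENNReal) * ENNReal.ofReal (M * (V + C2 * k)) := by
        rw [Finset.sum_const, Finset.card_univ, Fintype.card_fin, nsmul_eq_mul,
          ← ENNReal.ofReal_mul hM.le]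
    _ = ENNReal.ofReal (L * (M * (V + C2 * k))) := by
        rw [← ENNReal.ofReal_natCast L, ← ENNReal.ofReal_mul (Nat.cast_nonneg _)]
    _ ≤ ENNReal.ofReal C := by
        refine ENNReal.ofReal_le_ofReal ?_
        rw [hC_def]
        linarith
end

section
/- Let (G, +) be an abelian group and let E_P, E_Q : G → ℝ be functions, each satisfying E(σ) ≥ 0, E(0) = 0 and E(−σ) = E(σ) for all σ ∈ G. Let |·|_P and |·|_Q be the associated decomposition norms. Assume α := inf{ E_Q(σ) : σ ≠ 0 } > 0, and that there exist constants A > 0, B > 0 and exponents β ∈ (0,1], θ ∈ (0,1] such that for every σ ∈ G: E_P(σ) ≤ A · E_Q(σ)^β and E_P(σ) ≥ B · E_Q(σ)^θ. Then for every σ ∈ G one has B · |σ|_Q^θ ≤ |σ|_P ≤ A · α^{β−1} · |σ|_Q. -/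
/-- The decomposition norm associated to a function `E` on an abelian group:
`|σ| = inf { Σᵢ E σᵢ : σ₁ + ⋯ + σₕ = σ }`, the empty decomposition being allowed for `σ = 0`. -/
noncomputable def decompNorm {G : Type*} [AddCommGroup G] (E : G → ℝ) (σ : G) : ℝ :=
  sInf {s : ℝ | ∃ l : List G, l.sum = σ ∧ s = (l.map E).sum}

open NNReal in
lemma rpow_add_le_add_rpow_real {x y p : ℝ} (hx : 0 ≤ x) (hy : 0 ≤ y)
    (hp : 0 ≤ p) (hp1 : p ≤ 1) : (x + y) ^ p ≤ x ^ p + y ^ p := by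
  have h := NNReal.rpow_add_le_add_rpow (⟨x, hx⟩ : ℝ≥0) (⟨y, hy⟩ : ℝ≥0) hp hp1
  have := NNReal.coe_le_coe.mpr h
  exact Real.rpow_add_le_add_rpow hx hy hp hp1

lemma decompSet_nonneg {G : Type*} [AddCommGroup G] {E : G → ℝ} (hE : ∀ σ, 0 ≤ E σ)
    (σ : G) : ∀ s ∈ {s : ℝ | ∃ l : List G, l.sum = σ ∧ s = (l.map E).sum}, (0:ℝ) ≤ s := by
  rintro s ⟨l, -, rfl⟩
  refine List.sum_nonneg ?_
  intro x hx
  obtain ⟨y, -, rfl⟩ := List.mem_map.mp hx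
  exact hE y

/-- Comparison of decomposition norms: if `B · E_Q^θ ≤ E_P ≤ A · E_Q^β` with
`β, θ ∈ (0,1]` and `α = inf {E_Q σ : σ ≠ 0} > 0`, then
`B |σ|_Q^θ ≤ |σ|_P ≤ A α^{β-1} |σ|_Q` for every `σ`. -/
theorem stmt9 {G : Type*} [AddCommGroup G] (EP EQ : G → ℝ)
    (hP0 : ∀ σ, 0 ≤ EP σ) (hP00 : EP 0 = 0) (hPsymm : ∀ σ, EP (-σ) = EP σ)
    (hQ0 : ∀ σ, 0 ≤ EQ σ) (hQ00 : EQ 0 = 0) (hQsymm : ∀ σ, EQ (-σ) = EQ σ)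
    (α : ℝ) (hαdef : α = sInf (EQ '' {σ : G | σ ≠ 0})) (hα : 0 < α)
    (A B β θ : ℝ) (hA : 0 < A) (hB : 0 < B)
    (hβ : β ∈ Set.Ioc (0 : ℝ) 1) (hθ : θ ∈ Set.Ioc (0 : ℝ) 1)
    (hupper : ∀ σ, EP σ ≤ A * EQ σ ^ β)
    (hlower : ∀ σ, B * EQ σ ^ θ ≤ EP σ) :
    ∀ σ : G, B * decompNorm EQ σ ^ θ ≤ decompNorm EP σ ∧
      decompNorm EP σ ≤ A * α ^ (β - 1) * decompNorm EQ σ := by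
  intro σ
  set SP := {s : ℝ | ∃ l : List G, l.sum = σ ∧ s = (l.map EP).sum} with hSP
  set SQ := {s : ℝ | ∃ l : List G, l.sum = σ ∧ s = (l.map EQ).sum} with hSQ
  have hSPne : SP.Nonempty := ⟨EP σ, [σ], by simp⟩
  have hSQne : SQ.Nonempty := ⟨EQ σ, [σ], by simp⟩
  have hSPbdd : BddBelow SP := ⟨0, fun s hs => decompSet_nonneg hP0 σ s hs⟩
  have hSQbdd : BddBelow SQ := ⟨0, fun s hs => decompSet_nonneg hQ0 σ s hs⟩
  have hdQ0 : 0 ≤ decompNorm EQ σ := Real.sInf_nonneg (decompSet_nonneg hQ0 σ)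
  set c := A * α ^ (β - 1) with hc
  have hcpos : 0 < c := mul_pos hA (Real.rpow_pos_of_pos hα _)
  -- list sums are nonneg
  have hsumQ : ∀ l : List G, (0:ℝ) ≤ (l.map EQ).sum := fun l =>
    List.sum_nonneg (fun x hx => by obtain ⟨y, -, rfl⟩ := List.mem_map.mp hx; exact hQ0 y)
  -- key1 : B * ((l.map EQ).sum)^θ ≤ (l.map EP).sum
  have key1 : ∀ l : List G, B * ((l.map EQ).sum) ^ θ ≤ (l.map EP).sum := by
    intro l
    induction l with
    | nil => simp [Real.zero_rpow (ne_of_gt hθ.1)]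
    | cons a l ih =>
      simp only [List.map_cons, List.sum_cons]
      have h1 : (EQ a + (l.map EQ).sum) ^ θ ≤ EQ a ^ θ + (l.map EQ).sum ^ θ :=
        rpow_add_le_add_rpow_real (hQ0 a) (hsumQ l) (le_of_lt hθ.1) hθ.2
      have h2 : B * (EQ a ^ θ + (l.map EQ).sum ^ θ)
          = B * EQ a ^ θ + B * (l.map EQ).sum ^ θ := by ring
      calc B * (EQ a + (l.map EQ).sum) ^ θ
          ≤ B * (EQ a ^ θ + (l.map EQ).sum ^ θ) :=
            mul_le_mul_of_nonneg_left h1 (le_of_lt hB)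
        _ = B * EQ a ^ θ + B * (l.map EQ).sum ^ θ := h2
        _ ≤ EP a + (l.map EP).sum := add_le_add (hlower a) ih
  -- key2 : pointwise EP ≤ c * EQ
  have key2 : ∀ x : G, EP x ≤ c * EQ x := by
    intro x
    rcases eq_or_ne x 0 with rfl | hx
    · simp [hP00, hQ00]
    · have hbdd : BddBelow (EQ '' {σ : G | σ ≠ 0}) :=
        ⟨0, by rintro _ ⟨y, -, rfl⟩; exact hQ0 y⟩
      have hαle : α ≤ EQ x := by
        rw [hαdef]; exact csInf_le hbdd ⟨x, hx, rfl⟩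
      have hpos : 0 < EQ x := hα.trans_le hαle
      have h1 : EQ x ^ β = EQ x ^ (β - 1) * EQ x := by
        rw [← Real.rpow_add_one (ne_of_gt hpos) (β - 1), sub_add_cancel]
      have h2 : EQ x ^ (β - 1) ≤ α ^ (β - 1) :=
        Real.rpow_le_rpow_of_nonpos hα hαle (by linarith [hβ.2])
      calc EP x ≤ A * EQ x ^ β := hupper x
        _ = A * (EQ x ^ (β - 1) * EQ x) := by rw [h1]
        _ ≤ A * (α ^ (β - 1) * EQ x) :=
            mul_le_mul_of_nonneg_left
              (mul_le_mul_of_nonneg_right h2 (hQ0 x)) (le_of_lt hA)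
        _ = c * EQ x := by ring
  -- key3 : sums
  have key3 : ∀ l : List G, (l.map EP).sum ≤ c * (l.map EQ).sum := by
    intro l
    induction l with
    | nil => simp
    | cons a l ih =>
      simp only [List.map_cons, List.sum_cons, mul_add]
      exact add_le_add (key2 a) ih
  constructor
  · -- lower bound
    refine le_csInf hSPne ?_
    rintro s ⟨l, hl, rfl⟩
    have hle : decompNorm EQ σ ≤ (l.map EQ).sum := csInf_le hSQbdd ⟨l, hl, rfl⟩
    have : decompNorm EQ σ ^ θ ≤ ((l.map EQ).sum) ^ θ :=
      Real.rpow_le_rpow hdQ0 hle (le_of_lt hθ.1)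
    calc B * decompNorm EQ σ ^ θ ≤ B * ((l.map EQ).sum) ^ θ :=
          mul_le_mul_of_nonneg_left this (le_of_lt hB)
      _ ≤ (l.map EP).sum := key1 l
  · -- upper bound
    have h : ∀ s ∈ SQ, decompNorm EP σ / c ≤ s := by
      rintro s ⟨l, hl, rfl⟩
      rw [div_le_iff₀ hcpos]
      calc decompNorm EP σ ≤ (l.map EP).sum := csInf_le hSPbdd ⟨l, hl, rfl⟩
        _ ≤ c * (l.map EQ).sum := key3 l
        _ = (l.map EQ).sum * c := mul_comm _ _
    have := le_csInf hSQne h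
    rw [div_le_iff₀' hcpos] at this
    exact this
end

section
/- Let M ≥ 1 and m ≥ 1 be integers and let p_0 > M be a real number. There exists a constant C > 0, depending only on M, m and p_0, such that for every real p ≥ p_0, every continuously differentiable map u : ℝ^M → ℝ^m, and all points x, y in the closed unit ball of ℝ^M, one has |u(x) − u(y)| ≤ C · ( ‖u‖_{L^p(B)} + ‖Du‖_{L^p(B)} ) · ‖x − y‖^{1 − M/p}. -/
open MeasureTheory Metric Set ENNReal

section MorreyAux

variable {M m : ℕ}

private theorem morrey_ftc_seg (u : EuclideanSpace ℝ (Fin M) → EuclideanSpace ℝ (Fin m))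
    (hu : ContDiff ℝ 1 u) (a z : EuclideanSpace ℝ (Fin M)) :
    ‖u z - u a‖ ≤ ‖z - a‖ * ∫ t in Ioc (0:ℝ) 1, ‖fderiv ℝ u (a + t • (z - a))‖ := by
  set l : ℝ → EuclideanSpace ℝ (Fin M) := fun t => a + t • (z - a) with hl
  have hlc : Continuous l := by fun_prop
  have hd : ∀ t : ℝ, HasDerivAt (u ∘ l) ((fderiv ℝ u (l t)) (z - a)) t := by
    intro t
    have h1 : HasDerivAt l (z - a) t := by
      have h := ((hasDerivAt_id t).smul_const (z - a)).const_add a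
      rw [one_smul] at h; exact h
    exact ((hu.differentiable one_ne_zero (l t)).hasFDerivAt.comp_hasDerivAt t h1)
  have hcont : Continuous fun t : ℝ => (fderiv ℝ u (l t)) (z - a) :=
    ((hu.continuous_fderiv one_ne_zero).comp hlc).clm_apply continuous_const
  have key : u z - u a = ∫ t in (0:ℝ)..1, (fderiv ℝ u (l t)) (z - a) := by
    have := intervalIntegral.integral_eq_sub_of_hasDerivAt
      (f := u ∘ l) (f' := fun t => (fderiv ℝ u (l t)) (z - a))
      (fun t _ => hd t) (hcont.intervalIntegrable 0 1)
    simp only [Function.comp, hl] at this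
    rw [this]; simp [hl]
  rw [key, intervalIntegral.integral_of_le zero_le_one]
  calc ‖∫ t in Ioc (0:ℝ) 1, (fderiv ℝ u (l t)) (z - a)‖
      ≤ ∫ t in Ioc (0:ℝ) 1, ‖(fderiv ℝ u (l t)) (z - a)‖ := norm_integral_le_integral_norm _
    _ ≤ ∫ t in Ioc (0:ℝ) 1, ‖fderiv ℝ u (l t)‖ * ‖z - a‖ := by
        apply setIntegral_mono_on
        · exact hcont.norm.integrableOn_Ioc
        · exact (((hu.continuous_fderiv one_ne_zero).comp hlc).norm.mul
            continuous_const).integrableOn_Ioc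
        · exact measurableSet_Ioc
        · intro t _; exact (fderiv ℝ u (l t)).le_opNorm _
    _ = ‖z - a‖ * ∫ t in Ioc (0:ℝ) 1, ‖fderiv ℝ u (l t)‖ := by
        rw [← integral_const_mul]; congr 1; ext t; ring

private theorem morrey_holder {p : ℝ} (hp : 1 < p) (φ : EuclideanSpace ℝ (Fin M) → ℝ)
    (hφc : Continuous φ) (hφ0 : ∀ x, 0 ≤ φ x)
    {A : Set (EuclideanSpace ℝ (Fin M))} (hA : MeasurableSet A) (hAsub : A ⊆ ball 0 1) :
    ∫ z in A, φ z ≤ (∫ z in ball (0 : EuclideanSpace ℝ (Fin M)) 1, φ z ^ p) ^ (1/p) *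
      (volume A).toReal ^ (1 - 1/p) := by
  have hpq : p.HolderConjugate (p / (p - 1)) := Real.HolderConjugate.conjExponent hp
  set q := p / (p - 1) with hq
  have hAfin : volume A < ⊤ := lt_of_le_of_lt (measure_mono hAsub) measure_ball_lt_top
  set f : EuclideanSpace ℝ (Fin M) → ℝ≥0∞ := fun x => ENNReal.ofReal (φ x) with hf
  have hfm : Measurable f := (hφc.measurable).ennreal_ofReal
  have key : ∫⁻ x in A, f x ≤ (∫⁻ x in A, f x ^ p) ^ (1/p) * (volume A) ^ (1/q) := by
    have := ENNReal.lintegral_mul_le_Lp_mul_Lq (volume.restrict A) hpq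
      hfm.aemeasurable (f := f) (g := fun _ => 1) aemeasurable_const
    simpa using this
  have hconts : Continuous fun z : EuclideanSpace ℝ (Fin M) => φ z ^ p :=
    hφc.rpow_const (fun x => Or.inr (le_of_lt (lt_trans one_pos hp)))
  have hint_ball : IntegrableOn (fun z : EuclideanSpace ℝ (Fin M) => φ z ^ p) (ball 0 1) :=
    (hconts.continuousOn.integrableOn_compact (isCompact_closedBall _ _)).mono_set
      ball_subset_closedBall
  have hint_A : IntegrableOn (fun z : EuclideanSpace ℝ (Fin M) => φ z ^ p) A :=
    hint_ball.mono_set hAsub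
  have e1 : ∫ z in A, φ z = (∫⁻ x in A, f x).toReal := by
    rw [integral_eq_lintegral_of_nonneg_ae (Filter.Eventually.of_forall fun x => hφ0 x)
      hφc.aestronglyMeasurable.restrict]
  have e2 : ∫ z in A, φ z ^ p = (∫⁻ x in A, f x ^ p).toReal := by
    rw [integral_eq_lintegral_of_nonneg_ae
      (Filter.Eventually.of_forall fun x => Real.rpow_nonneg (hφ0 x) p)
      hconts.aestronglyMeasurable.restrict]
    congr 1
    apply lintegral_congr fun x => ?_
    rw [hf, ← ENNReal.ofReal_rpow_of_nonneg (hφ0 x) (le_of_lt (lt_trans one_pos hp))]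
  have hfin2 : (∫⁻ x in A, f x ^ p) ≠ ⊤ := by
    have := hint_A.lintegral_lt_top
    rw [show (fun x => ENNReal.ofReal (φ x ^ p)) = fun x => f x ^ p from ?_] at this
    · exact this.ne
    · ext x; rw [hf, ← ENNReal.ofReal_rpow_of_nonneg (hφ0 x) (le_of_lt (lt_trans one_pos hp))]
  have step : (∫⁻ x in A, f x).toReal ≤
      ((∫⁻ x in A, f x ^ p) ^ (1/p)).toReal * ((volume A) ^ (1/q)).toReal := by
    rw [← ENNReal.toReal_mul]
    apply ENNReal.toReal_mono _ key
    exact ENNReal.mul_ne_top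
      (ENNReal.rpow_ne_top_of_nonneg (one_div_nonneg.mpr hpq.pos.le) hfin2)
      (ENNReal.rpow_ne_top_of_nonneg (one_div_nonneg.mpr hpq.symm.pos.le) hAfin.ne)
  rw [e1]
  refine le_trans step ?_
  have h1q : 1/q = 1 - 1/p := by
    have := hpq.inv_add_inv_eq_one
    simp only [one_div]
    linarith
  rw [← ENNReal.toReal_rpow, ← ENNReal.toReal_rpow, h1q, ← e2]
  gcongr
  · exact setIntegral_nonneg hA (fun x _ => Real.rpow_nonneg (hφ0 x) p)
  · exact (Filter.Eventually.of_forall fun x => Real.rpow_nonneg (hφ0 x) p)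

private theorem morrey_scale (φ : EuclideanSpace ℝ (Fin M) → ℝ) (hφc : Continuous φ)
    (hφ0 : ∀ x, 0 ≤ φ x) {t r : ℝ} (ht : 0 < t) (ht1 : t ≤ 1)
    {a : EuclideanSpace ℝ (Fin M)} (ha : ‖a‖ ≤ 1)
    {S : Set (EuclideanSpace ℝ (Fin M))} (hSm : MeasurableSet S) (hS1 : S ⊆ ball 0 1)
    (hS2 : S ⊆ closedBall a r) :
    ∫ z in S, φ (a + t • (z - a)) ≤
      (t ^ M)⁻¹ * ∫ z in (ball (0 : EuclideanSpace ℝ (Fin M)) 1 ∩ closedBall a (t*r)), φ z := by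
  set Es := ball (0 : EuclideanSpace ℝ (Fin M)) 1 ∩ closedBall a (t*r) with hEs
  have hEsm : MeasurableSet Es := measurableSet_ball.inter measurableSet_closedBall
  have hmap : ∀ z ∈ S, a + t • (z - a) ∈ Es := by
    intro z hz
    constructor
    · have h1 : a + t • (z - a) = (1-t) • a + t • z := by
        rw [smul_sub, sub_smul, one_smul]; abel
      rw [mem_ball_zero_iff, h1]
      have hz1 : ‖z‖ < 1 := mem_ball_zero_iff.1 (hS1 hz)
      calc ‖(1-t) • a + t • z‖ ≤ ‖(1-t) • a‖ + ‖t • z‖ := norm_add_le _ _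
        _ = (1-t) * ‖a‖ + t * ‖z‖ := by
            rw [norm_smul, norm_smul, Real.norm_of_nonneg (by linarith),
              Real.norm_of_nonneg ht.le]
        _ < (1-t) * 1 + t * 1 := by
            have h2 : t * ‖z‖ < t * 1 := by
              exact mul_lt_mul_of_pos_left (by simpa using hz1) ht
            have h3 : (1-t) * ‖a‖ ≤ (1-t) * 1 := by
              apply mul_le_mul_of_nonneg_left ha (by linarith)
            linarith
        _ = 1 := by ring
    · rw [mem_closedBall_iff_norm]
      have : a + t • (z - a) - a = t • (z - a) := by abel
      rw [this, norm_smul, Real.norm_of_nonneg ht.le]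
      have hza : ‖z - a‖ ≤ r := by rw [← mem_closedBall_iff_norm]; exact hS2 hz
      exact mul_le_mul_of_nonneg_left hza ht.le
  have hg : IntegrableOn φ Es :=
    ((hφc.continuousOn.integrableOn_compact
      (isCompact_closedBall (0 : EuclideanSpace ℝ (Fin M)) 1)).mono_set
      ball_subset_closedBall).mono_set inter_subset_left
  set g := Es.indicator φ with hgdef
  have hgint : Integrable g := (integrable_indicator_iff hEsm).2 hg
  have hcomp : Integrable (fun z : EuclideanSpace ℝ (Fin M) => g ((a - t • a) + t • z)) := by
    have h1 : Integrable (fun w : EuclideanSpace ℝ (Fin M) => g ((a - t • a) + w)) :=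
      hgint.comp_add_left (a - t • a)
    exact (MeasureTheory.integrable_comp_smul_iff volume
      (fun w => g ((a - t • a) + w)) (ne_of_gt ht)).2 h1
  have heq : ∀ z : EuclideanSpace ℝ (Fin M), a + t • (z - a) = (a - t • a) + t • z := by
    intro z; rw [smul_sub]; abel
  calc ∫ z in S, φ (a + t • (z - a))
      = ∫ z, S.indicator (fun z => φ (a + t • (z - a))) z := (integral_indicator hSm).symm
    _ ≤ ∫ z, g ((a - t • a) + t • z) := by
        apply integral_mono_of_nonneg
        · exact Filter.Eventually.of_forall fun z => indicator_nonneg (fun w _ => hφ0 _) _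
        · exact hcomp
        · apply Filter.Eventually.of_forall; intro z
          show S.indicator (fun z => φ (a + t • (z - a))) z ≤ g ((a - t • a) + t • z)
          by_cases hz : z ∈ S
          · rw [indicator_of_mem hz, ← heq z, hgdef, indicator_of_mem (hmap z hz)]
          · rw [indicator_of_notMem hz]
            exact indicator_nonneg (fun w _ => hφ0 _) _
    _ = (t ^ M)⁻¹ * ∫ z, g z := by
        have := MeasureTheory.Measure.integral_comp_smul_of_nonneg
          (μ := (volume : Measure (EuclideanSpace ℝ (Fin M))))
          (fun w => g ((a - t • a) + w)) t (hR := ht.le)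
        simpa [finrank_euclideanSpace_fin, integral_add_left_eq_self, smul_eq_mul] using this
    _ = (t ^ M)⁻¹ * ∫ z in Es, φ z := by rw [integral_indicator hEsm]

end MorreyAux

set_option maxHeartbeats 1000000 in
/-- Sobolev–Morrey Hölder estimate on the unit ball of `ℝ^M`, with constant uniform in the
exponent `p ≥ p₀ > M`:
`|u(x) - u(y)| ≤ C (‖u‖_{L^p(B)} + ‖Du‖_{L^p(B)}) ‖x - y‖^{1 - M/p}`. -/
theorem stmt10 (M m : ℕ) (hM : 1 ≤ M) (hm : 1 ≤ m) (p₀ : ℝ) (hp₀ : (M : ℝ) < p₀) :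
    ∃ C > 0, ∀ p : ℝ, p₀ ≤ p →
      ∀ u : EuclideanSpace ℝ (Fin M) → EuclideanSpace ℝ (Fin m), ContDiff ℝ 1 u →
      ∀ x ∈ Metric.closedBall (0 : EuclideanSpace ℝ (Fin M)) 1,
      ∀ y ∈ Metric.closedBall (0 : EuclideanSpace ℝ (Fin M)) 1,
        ‖u x - u y‖ ≤ C *
          ((∫ z in Metric.ball (0 : EuclideanSpace ℝ (Fin M)) 1, ‖u z‖ ^ p) ^ (1 / p) +
            (∫ z in Metric.ball (0 : EuclideanSpace ℝ (Fin M)) 1,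
              ‖fderiv ℝ u z‖ ^ p) ^ (1 / p)) *
          ‖x - y‖ ^ (1 - (M : ℝ) / p) := by
  have hM1 : (1:ℝ) ≤ (M:ℝ) := by exact_mod_cast hM
  have hnt : Nontrivial (EuclideanSpace ℝ (Fin M)) := by
    apply Module.nontrivial_of_finrank_pos (R := ℝ)
    rw [finrank_euclideanSpace_fin]; omega
  set ω := (volume (ball (0 : EuclideanSpace ℝ (Fin M)) 1)).toReal with hωdef
  have hω0 : 0 < ω :=
    ENNReal.toReal_pos (measure_ball_pos _ _ one_pos).ne' measure_ball_lt_top.ne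
  have hp₀0 : 0 < p₀ := lt_of_le_of_lt (Nat.cast_nonneg M) hp₀
  have hMp₀ : 0 < 1 - (M:ℝ)/p₀ := by
    rw [sub_pos, div_lt_one hp₀0]; exact hp₀
  set K₀ : ℝ := (1 - (M:ℝ)/p₀)⁻¹ with hK₀def
  have hK₀ : 0 < K₀ := inv_pos.2 hMp₀
  refine ⟨2 * 16^M * max 1 ω⁻¹ * K₀, by positivity, ?_⟩
  intro p hp u hu x hx y hy
  have hpM : (M:ℝ) < p := lt_of_lt_of_le hp₀ hp
  have hp1 : (1:ℝ) < p := lt_of_le_of_lt hM1 hpM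
  have hp0 : (0:ℝ) < p := lt_trans one_pos hp1
  have hθ : 0 < 1 - (M:ℝ)/p := by rw [sub_pos, div_lt_one hp0]; exact hpM
  have hA0 : 0 ≤ (∫ z in ball (0:EuclideanSpace ℝ (Fin M)) 1, ‖u z‖ ^ p) ^ (1/p) :=
    Real.rpow_nonneg (setIntegral_nonneg measurableSet_ball
      fun z _ => Real.rpow_nonneg (norm_nonneg _) p) _
  set φ : EuclideanSpace ℝ (Fin M) → ℝ := fun z => ‖fderiv ℝ u z‖ with hφdef
  have hφc : Continuous φ := (hu.continuous_fderiv one_ne_zero).norm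
  have hφ0 : ∀ z, 0 ≤ φ z := fun z => norm_nonneg _
  set N : ℝ := (∫ z in ball (0:EuclideanSpace ℝ (Fin M)) 1, φ z ^ p) ^ (1/p) with hNdef
  have hN0 : 0 ≤ N := Real.rpow_nonneg (setIntegral_nonneg measurableSet_ball
    fun z _ => Real.rpow_nonneg (hφ0 z) p) _
  by_cases hxy : x = y
  · subst hxy
    have h0 : ‖x - x‖ = (0:ℝ) := by simp
    rw [h0, Real.zero_rpow hθ.ne', mul_zero]
    simp
  -- main case
  set r := ‖x - y‖ with hrdef
  have hr : 0 < r := norm_sub_pos_iff.2 hxy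
  have hx1 : ‖x‖ ≤ 1 := mem_closedBall_zero_iff.1 hx
  have hy1 : ‖y‖ ≤ 1 := mem_closedBall_zero_iff.1 hy
  have hr2 : r ≤ 2 := by
    calc r ≤ ‖x‖ + ‖y‖ := norm_sub_le x y
      _ ≤ 2 := by linarith
  set mid := (2⁻¹ : ℝ) • (x + y) with hmiddef
  have hmid : ‖mid‖ ≤ 1 := by
    rw [hmiddef, norm_smul]
    have h1 := norm_add_le x y
    have h2 : ‖(2⁻¹:ℝ)‖ = 2⁻¹ := by norm_num
    rw [h2]; nlinarith
  set cc := (1 - r/8) • mid with hccdef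
  set S := ball cc (r/16) with hSdef
  have hSm : MeasurableSet S := measurableSet_ball
  have hccmid : ‖cc - mid‖ ≤ r/8 := by
    have h : cc - mid = ((1 - r/8) - 1) • mid := by rw [sub_smul, one_smul, hccdef]
    rw [h, norm_smul]
    have : ‖(1 - r/8) - 1‖ = r/8 := by
      rw [Real.norm_eq_abs]; rw [abs_of_nonpos (by linarith)]; ring
    rw [this]; nlinarith
  have hS1 : S ⊆ ball (0:EuclideanSpace ℝ (Fin M)) 1 := by
    intro z hz
    rw [mem_ball_zero_iff]
    have h1 : ‖z - cc‖ < r/16 := mem_ball_iff_norm.1 hz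
    have h2 : ‖cc‖ ≤ 1 - r/8 := by
      rw [hccdef, norm_smul, Real.norm_of_nonneg (by linarith : (0:ℝ) ≤ 1 - r/8)]
      nlinarith
    have h3 : ‖z‖ ≤ ‖z - cc‖ + ‖cc‖ := by
      have := norm_add_le (z - cc) cc
      simpa using this
    linarith
  have hS2 : ∀ a : EuclideanSpace ℝ (Fin M), ‖mid - a‖ = r/2 → S ⊆ closedBall a r := by
    intro a hma z hz
    rw [mem_closedBall_iff_norm]
    have h1 : ‖z - cc‖ < r/16 := mem_ball_iff_norm.1 hz
    have h4 : z - a = (z - cc) + (cc - mid) + (mid - a) := by abel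
    calc ‖z - a‖ ≤ ‖z - cc‖ + ‖cc - mid‖ + ‖mid - a‖ := by rw [h4]; exact norm_add₃_le
      _ ≤ r/16 + r/8 + r/2 := by rw [hma]; linarith
      _ ≤ r := by linarith
  have hmidx : ‖mid - x‖ = r/2 := by
    have h : mid - x = (2⁻¹:ℝ) • (y - x) := by
      rw [hmiddef]; rw [smul_sub, smul_add]; module
    rw [h, norm_smul, norm_sub_rev]
    have h2 : ‖(2⁻¹:ℝ)‖ = 2⁻¹ := by norm_num
    rw [h2, ← hrdef]; ring
  have hmidy : ‖mid - y‖ = r/2 := by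
    have h : mid - y = (2⁻¹:ℝ) • (x - y) := by
      rw [hmiddef]; rw [smul_sub, smul_add]; module
    rw [h, norm_smul]
    have h2 : ‖(2⁻¹:ℝ)‖ = 2⁻¹ := by norm_num
    rw [h2, ← hrdef]; ring
  have hV : (volume S).toReal = (r/16)^M * ω := by
    rw [hSdef, Measure.addHaar_ball volume cc (by positivity : (0:ℝ) ≤ r/16),
      finrank_euclideanSpace_fin, ENNReal.toReal_mul,
      ENNReal.toReal_ofReal (by positivity)]
  have hV0 : 0 < (volume S).toReal := by rw [hV]; positivity
  set c₁ : ℝ := N * ω^(1 - 1/p) * r^((M:ℝ)*(1 - 1/p)) with hc₁def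
  have hc₁0 : 0 ≤ c₁ := by
    apply mul_nonneg (mul_nonneg hN0 (Real.rpow_nonneg hω0.le _)) (Real.rpow_nonneg hr.le _)
  -- KEY estimate
  have KEY : ∀ a : EuclideanSpace ℝ (Fin M), ‖a‖ ≤ 1 → S ⊆ closedBall a r →
      (∫ z in S, ‖u a - u z‖) ≤ r * (c₁ * K₀) := by
    intro a ha hSa
    set F : EuclideanSpace ℝ (Fin M) × ℝ → ℝ := fun w => φ (a + w.2 • (w.1 - a)) with hFdef
    have hFc : Continuous F :=
      hφc.comp (continuous_const.add (continuous_snd.smul (continuous_fst.sub continuous_const)))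
    have hFint : Integrable F ((volume.restrict S).prod (volume.restrict (Ioc (0:ℝ) 1))) := by
      rw [Measure.prod_restrict]
      exact (hFc.continuousOn.integrableOn_compact
        ((isCompact_closedBall (0:EuclideanSpace ℝ (Fin M)) 1).prod
          (isCompact_Icc (a := (0:ℝ)) (b := 1)))).mono_set
        (prod_mono (hS1.trans ball_subset_closedBall) Ioc_subset_Icc_self)
    set H : EuclideanSpace ℝ (Fin M) → ℝ :=
      fun z => ∫ t in Ioc (0:ℝ) 1, φ (a + t • (z - a)) with hHdef
    have hHint : IntegrableOn H S := hFint.integral_prod_left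
    have step2 : (∫ z in S, ‖u a - u z‖) ≤ ∫ z in S, r * H z := by
      apply setIntegral_mono_on
      · exact ((continuous_const.sub hu.continuous).norm.continuousOn.integrableOn_compact
          (isCompact_closedBall (0:EuclideanSpace ℝ (Fin M)) 1)).mono_set
          (hS1.trans ball_subset_closedBall)
      · exact hHint.const_mul r
      · exact hSm
      · intro z hz
        rw [norm_sub_rev]
        refine le_trans (morrey_ftc_seg u hu a z) ?_
        have hza : ‖z - a‖ ≤ r := mem_closedBall_iff_norm.1 (hSa hz)
        have hHnn : 0 ≤ H z := setIntegral_nonneg measurableSet_Ioc fun t _ => hφ0 _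
        exact mul_le_mul_of_nonneg_right hza hHnn
    have step3 : (∫ z in S, r * H z)
        = r * ∫ t in Ioc (0:ℝ) 1, ∫ z in S, φ (a + t • (z - a)) := by
      rw [integral_const_mul]
      congr 1
      exact integral_integral_swap
        (f := fun (z : EuclideanSpace ℝ (Fin M)) (t : ℝ) => φ (a + t • (z - a))) hFint
    have step4 : ∀ t ∈ Ioc (0:ℝ) 1,
        (∫ z in S, φ (a + t • (z - a))) ≤ c₁ * t ^ (-(M:ℝ)/p) := by
      rintro t ⟨ht0, ht1⟩
      refine le_trans (morrey_scale φ hφc hφ0 ht0 ht1 ha hSm hS1 hSa) ?_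
      have h2 := morrey_holder (M := M) hp1 φ hφc hφ0
        (A := ball (0:EuclideanSpace ℝ (Fin M)) 1 ∩ closedBall a (t*r))
        (measurableSet_ball.inter measurableSet_closedBall)
        (inter_subset_left)
      have h3 : (volume (ball (0:EuclideanSpace ℝ (Fin M)) 1 ∩
          closedBall a (t*r))).toReal ≤ (t*r)^M * ω := by
        have hmle : volume (ball (0:EuclideanSpace ℝ (Fin M)) 1 ∩ closedBall a (t*r))
            ≤ volume (closedBall a (t*r)) := measure_mono inter_subset_right
        have he : (volume (closedBall a (t*r))).toReal = (t*r)^M * ω := by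
          rw [Measure.addHaar_closedBall volume a (by positivity : (0:ℝ) ≤ t*r),
            finrank_euclideanSpace_fin, ENNReal.toReal_mul,
            ENNReal.toReal_ofReal (by positivity)]
        rw [← he]
        exact ENNReal.toReal_mono measure_closedBall_lt_top.ne hmle
      have h4 : (∫ z in ball (0:EuclideanSpace ℝ (Fin M)) 1 ∩ closedBall a (t*r), φ z)
          ≤ N * ((t*r)^M * ω)^(1 - 1/p) := by
        refine le_trans h2 ?_
        rw [← hNdef]
        have hexp : (0:ℝ) ≤ 1 - 1/p := by
          have : 1/p ≤ 1 := by rw [div_le_one hp0]; exact hp1.le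
          linarith
        exact mul_le_mul_of_nonneg_left
          (Real.rpow_le_rpow ENNReal.toReal_nonneg h3 hexp) hN0
    -- multiply by (t^M)⁻¹ and do the rpow algebra
      calc (t ^ M)⁻¹ * ∫ z in ball (0:EuclideanSpace ℝ (Fin M)) 1 ∩ closedBall a (t*r), φ z
          ≤ (t ^ M)⁻¹ * (N * ((t*r)^M * ω)^(1 - 1/p)) :=
            mul_le_mul_of_nonneg_left h4 (by positivity)
        _ = c₁ * t ^ (-(M:ℝ)/p) := by
            rw [hc₁def, ← Real.rpow_natCast t M, ← Real.rpow_natCast (t*r) M,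
              Real.mul_rpow (by positivity) hω0.le,
              ← Real.rpow_mul (by positivity : (0:ℝ) ≤ t*r),
              Real.mul_rpow ht0.le hr.le,
              ← Real.rpow_neg ht0.le]
            have hT : t ^ (-(M:ℝ)) * t ^ ((M:ℝ)*(1-1/p)) = t ^ (-(M:ℝ)/p) := by
              rw [← Real.rpow_add ht0]; congr 1; field_simp; ring
            linear_combination (N * ω^(1-1/p) * r^((M:ℝ)*(1-1/p))) * hT
    have step5 : (∫ t in Ioc (0:ℝ) 1, ∫ z in S, φ (a + t • (z - a))) ≤ c₁ * K₀ := by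
      have hexplt : (-1:ℝ) < -(M:ℝ)/p := by
        rw [neg_div, neg_lt_neg_iff, div_lt_one hp0]; exact hpM
      have hIint : IntegrableOn (fun t => ∫ z in S, φ (a + t • (z - a))) (Ioc (0:ℝ) 1) :=
        hFint.integral_prod_right
      have hRint : IntegrableOn (fun t : ℝ => c₁ * t ^ (-(M:ℝ)/p)) (Ioc (0:ℝ) 1) :=
        (intervalIntegrable_iff_integrableOn_Ioc_of_le zero_le_one).1
          ((intervalIntegral.intervalIntegrable_rpow' hexplt).const_mul c₁)
      refine le_trans (setIntegral_mono_on hIint hRint measurableSet_Ioc step4) ?_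
      have hval : (∫ t in Ioc (0:ℝ) 1, c₁ * t ^ (-(M:ℝ)/p)) = c₁ * (1 - (M:ℝ)/p)⁻¹ := by
        rw [← intervalIntegral.integral_of_le zero_le_one,
          intervalIntegral.integral_const_mul, integral_rpow (Or.inl hexplt)]
        rw [Real.one_rpow, Real.zero_rpow (by linarith : -(M:ℝ)/p + 1 ≠ 0)]
        rw [show -(M:ℝ)/p + 1 = 1 - (M:ℝ)/p by ring]
        rw [show ((1:ℝ) - 0) / (1 - (M:ℝ)/p) = (1 - (M:ℝ)/p)⁻¹ by rw [sub_zero, one_div]]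
      rw [hval]
      apply mul_le_mul_of_nonneg_left _ hc₁0
      rw [hK₀def]
      have hle : 1 - (M:ℝ)/p₀ ≤ 1 - (M:ℝ)/p := by
        have : (M:ℝ)/p ≤ (M:ℝ)/p₀ :=
          div_le_div_of_nonneg_left (Nat.cast_nonneg M) hp₀0 hp
        linarith
      exact inv_anti₀ hMp₀ hle
    calc (∫ z in S, ‖u a - u z‖) ≤ ∫ z in S, r * H z := step2
      _ = r * ∫ t in Ioc (0:ℝ) 1, ∫ z in S, φ (a + t • (z - a)) := step3
      _ ≤ r * (c₁ * K₀) := mul_le_mul_of_nonneg_left step5 hr.le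
  -- combine the two KEY estimates
  have hsub : ∀ a : EuclideanSpace ℝ (Fin M),
      IntegrableOn (fun z => u a - u z) S := fun a =>
    ((continuous_const.sub hu.continuous).continuousOn.integrableOn_compact
      (isCompact_closedBall (0:EuclideanSpace ℝ (Fin M)) 1)).mono_set
      (hS1.trans ball_subset_closedBall)
  have hVs : (volume S).toReal • (u x - u y)
      = (∫ z in S, (u x - u z)) - ∫ z in S, (u y - u z) := by
    rw [← integral_sub (hsub x) (hsub y)]
    simp only [sub_sub_sub_cancel_right]
    rw [setIntegral_const]; rfl
  have hnorm : (volume S).toReal * ‖u x - u y‖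
      ≤ (∫ z in S, ‖u x - u z‖) + ∫ z in S, ‖u y - u z‖ := by
    have h1 : (volume S).toReal * ‖u x - u y‖ = ‖(volume S).toReal • (u x - u y)‖ := by
      rw [norm_smul, Real.norm_of_nonneg hV0.le]
    rw [h1, hVs]
    refine le_trans (norm_sub_le _ _) ?_
    exact add_le_add (norm_integral_le_integral_norm _) (norm_integral_le_integral_norm _)
  have hfinal : ‖u x - u y‖ ≤ ((r/16)^M * ω)⁻¹ * (2 * (r * (c₁ * K₀))) := by
    have h2 : (volume S).toReal * ‖u x - u y‖ ≤ 2 * (r * (c₁ * K₀)) := by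
      refine le_trans hnorm ?_
      have k1 := KEY x hx1 (hS2 x hmidx)
      have k2 := KEY y hy1 (hS2 y hmidy)
      linarith
    rw [hV] at h2 hV0
    calc ‖u x - u y‖ = ((r/16)^M * ω)⁻¹ * (((r/16)^M * ω) * ‖u x - u y‖) := by
          field_simp
      _ ≤ ((r/16)^M * ω)⁻¹ * (2 * (r * (c₁ * K₀))) :=
          mul_le_mul_of_nonneg_left h2 (inv_nonneg.2 (by positivity))
  refine le_trans hfinal ?_
  -- final algebra
  have e16 : (((r/16:ℝ))^M)⁻¹ = 16^M * (r ^ ((M:ℕ):ℝ))⁻¹ := by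
    rw [div_pow, ← Real.rpow_natCast r M, inv_div, div_eq_mul_inv]
  have hT2 : (r ^ ((M:ℕ):ℝ))⁻¹ * (r * r ^ ((M:ℝ)*(1-1/p))) = r ^ (1 - (M:ℝ)/p) := by
    have h5 : r * r ^ ((M:ℝ)*(1-1/p)) = r ^ (1 + (M:ℝ)*(1-1/p)) := by
      rw [Real.rpow_add hr, Real.rpow_one]
    rw [h5, ← Real.rpow_neg hr.le, ← Real.rpow_add hr]
    congr 1; push_cast; field_simp; ring
  have hωb : ω⁻¹ * ω ^ (1 - 1/p) ≤ max 1 ω⁻¹ := by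
    have hωeq : ω⁻¹ * ω ^ (1-1/p) = ω ^ (-(1/p)) := by
      rw [← Real.rpow_neg_one ω, ← Real.rpow_add hω0]; congr 1; ring
    rw [hωeq]
    have h1p : 1/p ≤ 1 := by rw [div_le_one hp0]; exact hp1.le
    rcases le_or_gt 1 ω with h|h
    · exact le_max_of_le_left
        (Real.rpow_le_one_of_one_le_of_nonpos h (neg_nonpos.2 (by positivity)))
    · refine le_max_of_le_right ?_
      calc ω ^ (-(1/p)) ≤ ω ^ (-1:ℝ) :=
            Real.rpow_le_rpow_of_exponent_ge hω0 h.le (by linarith)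
        _ = ω⁻¹ := Real.rpow_neg_one ω
  have heq : ((r/16)^M * ω)⁻¹ * (2 * (r * (c₁ * K₀)))
      = 2 * 16^M * K₀ * N * (ω⁻¹ * ω^(1-1/p))
        * ((r ^ ((M:ℕ):ℝ))⁻¹ * (r * r ^ ((M:ℝ)*(1-1/p)))) := by
    rw [mul_inv, e16, hc₁def]; ring
  have hmain : ((r/16)^M * ω)⁻¹ * (2 * (r * (c₁ * K₀)))
      ≤ (2 * 16^M * max 1 ω⁻¹ * K₀) * N * r ^ (1-(M:ℝ)/p) := by
    rw [heq, hT2]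
    have hr1 : (0:ℝ) ≤ r ^ (1-(M:ℝ)/p) := Real.rpow_nonneg hr.le _
    calc 2 * 16^M * K₀ * N * (ω⁻¹ * ω^(1-1/p)) * r^(1-(M:ℝ)/p)
        ≤ 2 * 16^M * K₀ * N * (max 1 ω⁻¹) * r^(1-(M:ℝ)/p) := by
          apply mul_le_mul_of_nonneg_right _ hr1
          apply mul_le_mul_of_nonneg_left hωb
          apply mul_nonneg (by positivity) hN0
      _ = (2 * 16^M * max 1 ω⁻¹ * K₀) * N * r^(1-(M:ℝ)/p) := by ring
  refine le_trans hmain ?_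
  have hC0 : (0:ℝ) ≤ 2 * 16^M * max 1 ω⁻¹ * K₀ := by
    have h1 : (0:ℝ) ≤ max 1 ω⁻¹ := le_max_of_le_left zero_le_one
    exact mul_nonneg (mul_nonneg (by positivity) h1) hK₀.le
  apply mul_le_mul_of_nonneg_right _ (Real.rpow_nonneg hr.le _)
  exact mul_le_mul_of_nonneg_left (le_add_of_nonneg_left hA0) hC0
end

section
/- Let M ≥ 1 and m ≥ 1 be integers and let p_0 > M be a real number. There exists a constant C > 0, depending only on M, m and p_0, such that for every real p ≥ p_0 and every continuously differentiable map u : ℝ^M → ℝ^m, one has ‖u − ū_B‖_{L^p(B)} ≤ C · ‖Du‖_{L^p(B)}, where ū_B denotes the (vector-valued) average of u over B with respect to Lebesgue measure. -/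
open MeasureTheory Metric Set


lemma seg_bound {M m : ℕ} (u : EuclideanSpace ℝ (Fin M) → EuclideanSpace ℝ (Fin m))
    (hu : ContDiff ℝ 1 u) (z w : EuclideanSpace ℝ (Fin M)) :
    ‖u z - u w‖ ≤ (∫ t in (0:ℝ)..1, ‖fderiv ℝ u (w + t • (z - w))‖) * ‖z - w‖ := by
  set γ : ℝ → EuclideanSpace ℝ (Fin M) := fun t => w + t • (z - w) with hγdef
  have hγc : Continuous γ := by continuity
  have hud : Differentiable ℝ u := hu.differentiable one_ne_zero
  have hder : ∀ t : ℝ, HasDerivAt (fun s => u (γ s)) (fderiv ℝ u (γ t) (z - w)) t := by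
    intro t
    have h1 : HasDerivAt γ (z - w) t := by
      simpa [hγdef] using ((hasDerivAt_id t).smul_const (z - w)).const_add w
    exact (hud (γ t)).hasFDerivAt.comp_hasDerivAt t h1
  have hcont : Continuous fun t => fderiv ℝ u (γ t) (z - w) :=
    ((hu.continuous_fderiv one_ne_zero).comp hγc).clm_apply continuous_const
  have key : ∫ t in (0:ℝ)..1, fderiv ℝ u (γ t) (z - w) = u (γ 1) - u (γ 0) :=
    intervalIntegral.integral_eq_sub_of_hasDerivAt (fun t _ => hder t)
      (hcont.intervalIntegrable 0 1)
  have hγ0 : γ 0 = w := by simp [hγdef]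
  have hγ1 : γ 1 = z := by simp [hγdef]
  calc ‖u z - u w‖ = ‖∫ t in (0:ℝ)..1, fderiv ℝ u (γ t) (z - w)‖ := by
        rw [key, hγ0, hγ1]
    _ ≤ ∫ t in (0:ℝ)..1, ‖fderiv ℝ u (γ t) (z - w)‖ :=
        intervalIntegral.norm_integral_le_integral_norm zero_le_one
    _ ≤ ∫ t in (0:ℝ)..1, ‖fderiv ℝ u (γ t)‖ * ‖z - w‖ := by
        apply intervalIntegral.integral_mono_on zero_le_one (hcont.norm.intervalIntegrable 0 1)
          ((((hu.continuous_fderiv one_ne_zero).comp hγc).norm.mul continuous_const).intervalIntegrable 0 1)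
        intro t _
        exact (fderiv ℝ u (γ t)).le_opNorm _
    _ = (∫ t in (0:ℝ)..1, ‖fderiv ℝ u (γ t)‖) * ‖z - w‖ := by
        rw [intervalIntegral.integral_mul_const]



lemma cov_ball {M : ℕ} (f : EuclideanSpace ℝ (Fin M) → ℝ) (z : EuclideanSpace ℝ (Fin M))
    {t : ℝ} (ht1 : t < 1) :
    ∫ y in ball (t • z) (1 - t), f y
      = (1 - t) ^ M * ∫ w in ball (0 : EuclideanSpace ℝ (Fin M)) 1, f (w + t • (z - w)) := by
  have h1t : (0:ℝ) < 1 - t := by linarith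
  set φ : EuclideanSpace ℝ (Fin M) → EuclideanSpace ℝ (Fin M) :=
    fun w => (1 - t) • w + t • z with hφdef
  have himg : φ '' ball (0 : EuclideanSpace ℝ (Fin M)) 1 = ball (t • z) (1 - t) := by
    ext y
    simp only [mem_image, mem_ball, hφdef]
    constructor
    · rintro ⟨w, hw, rfl⟩
      rw [dist_eq_norm, add_sub_cancel_right, norm_smul, Real.norm_eq_abs,
        abs_of_pos h1t]
      calc (1 - t) * ‖w‖ < (1 - t) * 1 := by
            rw [dist_eq_norm, sub_zero] at hw
            exact mul_lt_mul_of_pos_left hw h1t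
        _ = 1 - t := mul_one _
    · intro hy
      refine ⟨(1 - t)⁻¹ • (y - t • z), ?_, ?_⟩
      · rw [dist_eq_norm, sub_zero, norm_smul, Real.norm_eq_abs, abs_of_pos (inv_pos.2 h1t)]
        rw [dist_eq_norm] at hy
        rw [inv_mul_lt_iff₀ h1t, mul_one]
        exact hy
      · rw [smul_smul, mul_inv_cancel₀ h1t.ne', one_smul, sub_add_cancel]
  have hder : ∀ x ∈ ball (0 : EuclideanSpace ℝ (Fin M)) 1,
      HasFDerivWithinAt φ ((1 - t) • ContinuousLinearMap.id ℝ (EuclideanSpace ℝ (Fin M)))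
        (ball 0 1) x := fun x _ =>
    (((hasFDerivAt_id x).const_smul (1 - t)).add_const (t • z)).hasFDerivWithinAt
  have hinj : InjOn φ (ball (0 : EuclideanSpace ℝ (Fin M)) 1) := by
    intro a _ b _ h
    have h2 : (1 - t) • a = (1 - t) • b := by
      have := add_right_cancel h
      exact this
    exact smul_right_injective _ h1t.ne' h2
  have hdet : ((1 - t) • ContinuousLinearMap.id ℝ (EuclideanSpace ℝ (Fin M))).det
      = (1 - t) ^ M := by
    rw [ContinuousLinearMap.det]
    simp [LinearMap.det_smul, finrank_euclideanSpace_fin]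
  rw [← himg, integral_image_eq_integral_abs_det_fderiv_smul volume measurableSet_ball hder hinj f]
  have : ∀ w, |((1 - t) • ContinuousLinearMap.id ℝ (EuclideanSpace ℝ (Fin M))).det| •
      f (φ w) = (1 - t) ^ M * f (w + t • (z - w)) := by
    intro w
    rw [hdet, abs_of_nonneg (pow_nonneg h1t.le M), smul_eq_mul]
    congr 2
    simp only [hφdef, smul_sub, sub_smul, one_smul]
    abel
  simp_rw [this]
  rw [integral_const_mul]


lemma holder_step {M : ℕ} (hM : 1 ≤ M) {p : ℝ} (hp : (M : ℝ) < p)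
    (g : EuclideanSpace ℝ (Fin M) → ℝ) (hg : Continuous g) (hgnn : ∀ y, 0 ≤ g y)
    {z : EuclideanSpace ℝ (Fin M)} (hz : z ∈ ball (0 : EuclideanSpace ℝ (Fin M)) 1)
    {t : ℝ} (ht : t ∈ Ioo (0:ℝ) 1) :
    ∫ w in ball (0 : EuclideanSpace ℝ (Fin M)) 1, g (w + t • (z - w))
      ≤ (1 - t) ^ (-((M : ℝ) / p)) *
        ((volume (ball (0 : EuclideanSpace ℝ (Fin M)) 1)).toReal ^ (1 - 1/p) *
          (∫ y in ball (0 : EuclideanSpace ℝ (Fin M)) 1, g y ^ p) ^ (1/p)) := by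
  have hM1 : (1:ℝ) ≤ (M:ℝ) := by exact_mod_cast hM
  have hp1 : (1:ℝ) < p := lt_of_le_of_lt hM1 hp
  have hp0 : (0:ℝ) < p := by linarith
  have h1t : (0:ℝ) < 1 - t := by linarith [ht.2]
  set B := ball (0 : EuclideanSpace ℝ (Fin M)) 1 with hBdef
  set S := ball (t • z) (1 - t) with hSdef
  set q : ℝ := p / (p - 1) with hqdef
  have hpq : p.HolderConjugate q := Real.HolderConjugate.conjExponent hp1
  have hq0 : 0 < q := hpq.symm.pos
  -- S ⊆ B
  have hSB : S ⊆ B := by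
    apply ball_subset_ball'
    rw [dist_eq_norm, sub_zero, norm_smul, Real.norm_eq_abs, abs_of_pos ht.1]
    nlinarith [mem_ball_zero_iff.1 hz, ht.1, ht.2]
  -- measure of S
  have hμS : (volume S).toReal = (1 - t) ^ M * (volume B).toReal := by
    rw [hSdef, Measure.addHaar_ball_of_pos volume (t • z) h1t, finrank_euclideanSpace_fin]
    rw [ENNReal.toReal_mul, ENNReal.toReal_ofReal (pow_nonneg h1t.le M)]
  haveI : IsFiniteMeasure (volume.restrict S) :=
    ⟨by rw [Measure.restrict_apply_univ]; exact measure_ball_lt_top⟩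
  -- Hölder on S
  obtain ⟨K, hK⟩ := (isCompact_closedBall (0 : EuclideanSpace ℝ (Fin M)) 1).exists_bound_of_continuousOn
    hg.continuousOn
  have hgb : ∀ᵐ y ∂(volume.restrict S), ‖g y‖ ≤ K := by
    filter_upwards [ae_restrict_mem measurableSet_ball] with y hy
    exact hK y (ball_subset_closedBall (hSB hy))
  have hmem : MemLp g (ENNReal.ofReal p) (volume.restrict S) :=
    MemLp.of_bound hg.aestronglyMeasurable K hgb
  have hmem1 : MemLp (fun _ => (1:ℝ)) (ENNReal.ofReal q) (volume.restrict S) := memLp_const 1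
  have holder : ∫ y in S, g y ≤ (∫ y in S, g y ^ p) ^ (1/p) * (∫ y in S, (1:ℝ) ^ q) ^ (1/q) := by
    have := integral_mul_le_Lp_mul_Lq_of_nonneg hpq
      (Filter.Eventually.of_forall fun y => hgnn y) (Filter.Eventually.of_forall fun _ => zero_le_one)
      hmem hmem1
    simpa using this
  -- bound the S-integral of g^p by the B-integral
  have hgp_int : IntegrableOn (fun y => g y ^ p) B volume := by
    have hc : Continuous fun y => g y ^ p := hg.rpow_const fun y => Or.inr hp0.le
    exact (hc.continuousOn.integrableOn_compact (isCompact_closedBall _ _)).mono_set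
      ball_subset_closedBall
  have hup : ∫ y in S, g y ^ p ≤ ∫ y in B, g y ^ p := by
    apply setIntegral_mono_set hgp_int
    · exact Filter.Eventually.of_forall fun y => Real.rpow_nonneg (hgnn y) p
    · exact HasSubset.Subset.eventuallyLE hSB
  have hSnn : 0 ≤ ∫ y in S, g y ^ p :=
    setIntegral_nonneg measurableSet_ball fun y _ => Real.rpow_nonneg (hgnn y) p
  have hrpow_mono : (∫ y in S, g y ^ p) ^ (1/p) ≤ (∫ y in B, g y ^ p) ^ (1/p) :=
    Real.rpow_le_rpow hSnn hup (by positivity)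
  -- compute ∫ 1^q over S
  have hone : ∫ y in S, (1:ℝ) ^ q = (1 - t) ^ M * (volume B).toReal := by
    simp only [Real.one_rpow]
    rw [setIntegral_const, smul_eq_mul, mul_one, measureReal_def, hμS]
  -- combine with cov_ball
  have hcov := cov_ball g z ht.2
  have hBg_nn : 0 ≤ ∫ w in B, g (w + t • (z - w)) :=
    setIntegral_nonneg measurableSet_ball fun w _ => hgnn _
  set Np : ℝ := (∫ y in B, g y ^ p) ^ (1/p) with hNp
  have hNpnn : 0 ≤ Np := Real.rpow_nonneg
    (setIntegral_nonneg measurableSet_ball fun y _ => Real.rpow_nonneg (hgnn y) p) _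
  have key : (1 - t) ^ M * ∫ w in B, g (w + t • (z - w))
      ≤ Np * ((1 - t) ^ M * (volume B).toReal) ^ (1/q) := by
    rw [← hcov]
    calc ∫ y in S, g y ≤ (∫ y in S, g y ^ p) ^ (1/p) * (∫ y in S, (1:ℝ) ^ q) ^ (1/q) := holder
      _ ≤ Np * ((1 - t) ^ M * (volume B).toReal) ^ (1/q) := by
          rw [hone]
          exact mul_le_mul_of_nonneg_right hrpow_mono (Real.rpow_nonneg
            (by positivity) _)
  -- now divide by (1-t)^M and rearrange exponents
  have hpowpos : (0:ℝ) < (1 - t) ^ M := pow_pos h1t M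
  have hωnn : (0:ℝ) ≤ (volume B).toReal := ENNReal.toReal_nonneg
  have hsplit : ((1 - t) ^ M * (volume B).toReal) ^ (1/q)
      = (1 - t) ^ ((M:ℝ) / q) * (volume B).toReal ^ (1/q) := by
    rw [Real.mul_rpow (pow_nonneg h1t.le M) hωnn, ← Real.rpow_natCast (1 - t) M,
      ← Real.rpow_mul h1t.le]
    ring_nf
  have hexp : ((M:ℝ) / q) - (M:ℝ) = -((M:ℝ)/p) := by
    rw [hqdef]
    field_simp
    ring
  have hq1p : (1:ℝ)/q = 1 - 1/p := by
    rw [hqdef]; field_simp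
  calc ∫ w in B, g (w + t • (z - w))
      = ((1 - t) ^ M)⁻¹ * ((1 - t) ^ M * ∫ w in B, g (w + t • (z - w))) := by
        rw [← mul_assoc, inv_mul_cancel₀ hpowpos.ne', one_mul]
    _ ≤ ((1 - t) ^ M)⁻¹ * (Np * ((1 - t) ^ M * (volume B).toReal) ^ (1/q)) :=
        mul_le_mul_of_nonneg_left key (by positivity)
    _ = (1 - t) ^ (-((M : ℝ) / p)) * ((volume B).toReal ^ (1 - 1/p) * Np) := by
        have e1 : (((1 - t) ^ M : ℝ))⁻¹ = (1 - t) ^ (-(M:ℝ)) := by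
          rw [← Real.rpow_natCast (1 - t) M, ← Real.rpow_neg h1t.le]
        have e2 : (1 - t) ^ (-(M:ℝ)) * (1 - t) ^ ((M:ℝ)/q) = (1 - t) ^ (-((M:ℝ)/p)) := by
          rw [← Real.rpow_add h1t]
          congr 1
          linarith [hexp]
        rw [hsplit, e1, show (1:ℝ) - 1/p = 1/q from hq1p.symm, ← e2]
        ring


lemma pointwise_bound {M m : ℕ} (hM : 1 ≤ M) {p : ℝ} (hp : (M : ℝ) < p)
    (u : EuclideanSpace ℝ (Fin M) → EuclideanSpace ℝ (Fin m)) (hu : ContDiff ℝ 1 u)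
    {z : EuclideanSpace ℝ (Fin M)} (hz : z ∈ ball (0 : EuclideanSpace ℝ (Fin M)) 1) :
    ‖u z - (volume (ball (0 : EuclideanSpace ℝ (Fin M)) 1)).toReal⁻¹ •
        ∫ w in ball (0 : EuclideanSpace ℝ (Fin M)) 1, u w‖
      ≤ (volume (ball (0 : EuclideanSpace ℝ (Fin M)) 1)).toReal⁻¹ * 2 * (p / (p - M)) *
        ((volume (ball (0 : EuclideanSpace ℝ (Fin M)) 1)).toReal ^ (1 - 1/p) *
          (∫ y in ball (0 : EuclideanSpace ℝ (Fin M)) 1, ‖fderiv ℝ u y‖ ^ p) ^ (1/p)) := by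
  have hM1 : (1:ℝ) ≤ (M:ℝ) := by exact_mod_cast hM
  have hp1 : (1:ℝ) < p := lt_of_le_of_lt hM1 hp
  have hp0 : (0:ℝ) < p := by linarith
  set B := ball (0 : EuclideanSpace ℝ (Fin M)) 1 with hBdef
  set ω : ℝ := (volume B).toReal with hωdef
  have hωpos : 0 < ω := ENNReal.toReal_pos (measure_ball_pos volume _ one_pos).ne'
    measure_ball_lt_top.ne
  set g : EuclideanSpace ℝ (Fin M) → ℝ := fun y => ‖fderiv ℝ u y‖ with hgdef
  have hgc : Continuous g := (hu.continuous_fderiv one_ne_zero).norm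
  have hgnn : ∀ y, 0 ≤ g y := fun y => norm_nonneg _
  set Np : ℝ := (∫ y in B, g y ^ p) ^ (1/p) with hNpdef
  have hNpnn : 0 ≤ Np := Real.rpow_nonneg
    (setIntegral_nonneg measurableSet_ball fun y _ => Real.rpow_nonneg (hgnn y) p) _
  -- integrability of u on B
  have hui : IntegrableOn u B volume :=
    (hu.continuous.continuousOn.integrableOn_compact (isCompact_closedBall _ _)).mono_set
      ball_subset_closedBall
  -- step 1 : express the difference as an average
  have havg : u z - ω⁻¹ • ∫ w in B, u w = ω⁻¹ • ∫ w in B, (u z - u w) := by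
    rw [integral_sub (integrableOn_const (C := u z) measure_ball_lt_top.ne) hui,
      setIntegral_const, measureReal_def, smul_sub, smul_smul, inv_mul_cancel₀ hωpos.ne', one_smul]
  have hstep1 : ‖u z - ω⁻¹ • ∫ w in B, u w‖ ≤ ω⁻¹ * ∫ w in B, ‖u z - u w‖ := by
    rw [havg, norm_smul, Real.norm_eq_abs, abs_of_pos (inv_pos.2 hωpos)]
    exact mul_le_mul_of_nonneg_left (norm_integral_le_integral_norm _)
      (inv_pos.2 hωpos).le
  -- product integrability
  set F : EuclideanSpace ℝ (Fin M) × ℝ → ℝ := fun q => g (q.1 + q.2 • (z - q.1)) with hFdef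
  have hFc : Continuous F := by
    apply hgc.comp
    exact continuous_fst.add (continuous_snd.smul (continuous_const.sub continuous_fst))
  have hFint : Integrable F ((volume.restrict B).prod (volume.restrict (Ioo (0:ℝ) 1))) := by
    rw [Measure.prod_restrict, ← Measure.volume_eq_prod]
    exact (hFc.continuousOn.integrableOn_compact
      ((isCompact_closedBall (0 : EuclideanSpace ℝ (Fin M)) 1).prod (isCompact_Icc (a := (0:ℝ)) (b := 1)))).mono_set
      (prod_mono ball_subset_closedBall Ioo_subset_Icc_self)
  have hmarg : IntegrableOn
      (fun w => ∫ t in Ioo (0:ℝ) 1, g (w + t • (z - w))) B volume := by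
    have := hFint.integral_prod_left
    exact this
  -- step 2 : segment bound
  have hstep2 : ∫ w in B, ‖u z - u w‖
      ≤ ∫ w in B, 2 * ∫ t in Ioo (0:ℝ) 1, g (w + t • (z - w)) := by
    apply setIntegral_mono_on
    · exact (((continuous_const.sub hu.continuous).norm).continuousOn.integrableOn_compact
        (isCompact_closedBall _ _)).mono_set ball_subset_closedBall
    · exact hmarg.const_mul 2
    · exact measurableSet_ball
    · intro w hw
      have hseg := seg_bound u hu z w
      have hIoo : (∫ t in (0:ℝ)..1, ‖fderiv ℝ u (w + t • (z - w))‖)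
          = ∫ t in Ioo (0:ℝ) 1, g (w + t • (z - w)) := by
        rw [intervalIntegral.integral_of_le zero_le_one, integral_Ioc_eq_integral_Ioo]
      have hnnI : 0 ≤ ∫ t in Ioo (0:ℝ) 1, g (w + t • (z - w)) :=
        setIntegral_nonneg measurableSet_Ioo fun t _ => hgnn _
      have hzw : ‖z - w‖ ≤ 2 := by
        have h1 := mem_ball_zero_iff.1 hz
        have h2 := mem_ball_zero_iff.1 hw
        calc ‖z - w‖ ≤ ‖z‖ + ‖w‖ := norm_sub_le _ _
          _ ≤ 2 := by linarith
      calc ‖u z - u w‖ ≤ (∫ t in (0:ℝ)..1, ‖fderiv ℝ u (w + t • (z - w))‖) * ‖z - w‖ := hseg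
        _ = (∫ t in Ioo (0:ℝ) 1, g (w + t • (z - w))) * ‖z - w‖ := by rw [hIoo]
        _ ≤ (∫ t in Ioo (0:ℝ) 1, g (w + t • (z - w))) * 2 :=
            mul_le_mul_of_nonneg_left hzw hnnI
        _ = 2 * ∫ t in Ioo (0:ℝ) 1, g (w + t • (z - w)) := mul_comm _ _
  -- step 3 : Fubini
  have hswap : ∫ w in B, ∫ t in Ioo (0:ℝ) 1, g (w + t • (z - w))
      = ∫ t in Ioo (0:ℝ) 1, ∫ w in B, g (w + t • (z - w)) :=
    integral_integral_swap hFint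
  -- step 4 : Hölder bound and the t-integral
  set r : ℝ := -((M:ℝ)/p) with hrdef
  have hr1 : (-1:ℝ) < r := by
    rw [hrdef, neg_lt, neg_neg, div_lt_one hp0]
    exact hp
  have hrint : IntegrableOn (fun t : ℝ => (1 - t) ^ r * (ω ^ (1 - 1/p) * Np))
      (Ioo (0:ℝ) 1) volume := by
    have h1 : IntervalIntegrable (fun x : ℝ => x ^ r) volume 0 1 := intervalIntegral.intervalIntegrable_rpow' hr1
    have h2 : IntervalIntegrable (fun t : ℝ => (1 - t) ^ r) volume 0 1 := by
      simpa using (h1.comp_sub_left 1).symm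
    have h3 : IntegrableOn (fun t : ℝ => (1 - t) ^ r) (Ioo (0:ℝ) 1) volume :=
      ((intervalIntegrable_iff_integrableOn_Ioc_of_le zero_le_one).1 h2).mono_set Ioo_subset_Ioc_self
    exact h3.mul_const _
  have hstep4 : ∫ t in Ioo (0:ℝ) 1, ∫ w in B, g (w + t • (z - w))
      ≤ ∫ t in Ioo (0:ℝ) 1, (1 - t) ^ r * (ω ^ (1 - 1/p) * Np) := by
    apply integral_mono_of_nonneg
    · exact Filter.Eventually.of_forall fun t =>
        setIntegral_nonneg measurableSet_ball fun w _ => hgnn _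
    · exact hrint
    · filter_upwards [ae_restrict_mem measurableSet_Ioo] with t ht
      exact holder_step hM hp g hgc hgnn hz ht
  have hrval : ∫ t in Ioo (0:ℝ) 1, (1 - t) ^ r = p / (p - (M:ℝ)) := by
    rw [← integral_Ioc_eq_integral_Ioo, ← intervalIntegral.integral_of_le zero_le_one]
    rw [intervalIntegral.integral_comp_sub_left (fun x : ℝ => x ^ r) 1]
    norm_num
    rw [integral_rpow (Or.inl hr1)]
    rw [Real.one_rpow, Real.zero_rpow (by linarith : (0:ℝ) < r + 1).ne']
    rw [hrdef]
    field_simp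
    ring_nf
  -- final assembly
  calc ‖u z - ω⁻¹ • ∫ w in B, u w‖
      ≤ ω⁻¹ * ∫ w in B, ‖u z - u w‖ := hstep1
    _ ≤ ω⁻¹ * ∫ w in B, 2 * ∫ t in Ioo (0:ℝ) 1, g (w + t • (z - w)) :=
        mul_le_mul_of_nonneg_left hstep2 (inv_pos.2 hωpos).le
    _ = ω⁻¹ * (2 * ∫ w in B, ∫ t in Ioo (0:ℝ) 1, g (w + t • (z - w))) := by
        rw [integral_const_mul]
    _ = ω⁻¹ * (2 * ∫ t in Ioo (0:ℝ) 1, ∫ w in B, g (w + t • (z - w))) := by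
        rw [hswap]
    _ ≤ ω⁻¹ * (2 * ∫ t in Ioo (0:ℝ) 1, (1 - t) ^ r * (ω ^ (1 - 1/p) * Np)) := by
        have h2 := mul_le_mul_of_nonneg_left hstep4 (by norm_num : (0:ℝ) ≤ 2)
        exact mul_le_mul_of_nonneg_left h2 (inv_pos.2 hωpos).le
    _ = ω⁻¹ * 2 * (p / (p - (M:ℝ))) * (ω ^ (1 - 1/p) * Np) := by
        rw [integral_mul_const, hrval]
        ring


lemma rpow_le_max {a e : ℝ} (ha : 0 < a) (he0 : 0 ≤ e) (he1 : e ≤ 1) : a ^ e ≤ max a 1 := by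
  rcases le_total a 1 with h | h
  · exact le_max_of_le_right (Real.rpow_le_one ha.le h he0)
  · calc a ^ e ≤ a ^ (1:ℝ) := Real.rpow_le_rpow_of_exponent_le h he1
      _ = a := Real.rpow_one a
      _ ≤ _ := le_max_left _ _

lemma ratio_mono {M p₀ p : ℝ} (h0 : M < p₀) (hp : p₀ ≤ p) (hMpos : 0 < M) :
    p / (p - M) ≤ p₀ / (p₀ - M) := by
  rw [div_le_div_iff₀ (by linarith) (by linarith)]
  nlinarith

/-- Poincaré inequality on the unit ball of `ℝ^M`, with constant uniform in the exponent
`p ≥ p₀ > M`: `‖u - ū_B‖_{L^p(B)} ≤ C ‖Du‖_{L^p(B)}`, where `ū_B` is the average of `u`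
over the ball. -/
theorem stmt12 (M m : ℕ) (hM : 1 ≤ M) (hm : 1 ≤ m) (p₀ : ℝ) (hp₀ : (M : ℝ) < p₀) :
    ∃ C > 0, ∀ p : ℝ, p₀ ≤ p →
      ∀ u : EuclideanSpace ℝ (Fin M) → EuclideanSpace ℝ (Fin m), ContDiff ℝ 1 u →
        (∫ z in Metric.ball (0 : EuclideanSpace ℝ (Fin M)) 1,
            ‖u z - (volume (Metric.ball (0 : EuclideanSpace ℝ (Fin M)) 1)).toReal⁻¹ •
              ∫ w in Metric.ball (0 : EuclideanSpace ℝ (Fin M)) 1, u w‖ ^ p) ^ (1 / p) ≤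
          C * (∫ z in Metric.ball (0 : EuclideanSpace ℝ (Fin M)) 1,
            ‖fderiv ℝ u z‖ ^ p) ^ (1 / p) := by
  have hM1 : (1:ℝ) ≤ (M:ℝ) := by exact_mod_cast hM
  have hMpos : (0:ℝ) < (M:ℝ) := by linarith
  set B := ball (0 : EuclideanSpace ℝ (Fin M)) 1 with hBdef
  set ω : ℝ := (volume B).toReal with hωdef
  have hωpos : 0 < ω := ENNReal.toReal_pos (measure_ball_pos volume _ one_pos).ne'
    measure_ball_lt_top.ne
  have hApos : 0 < p₀ / (p₀ - (M:ℝ)) := div_pos (by linarith) (by linarith)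
  have hmax1 : (0:ℝ) < max ω 1 := lt_of_lt_of_le one_pos (le_max_right _ _)
  refine ⟨max ω 1 * (ω⁻¹ * 2 * (p₀ / (p₀ - (M:ℝ))) * max ω 1), by positivity, ?_⟩
  intro p hpp0 u hu
  have hp : (M:ℝ) < p := lt_of_lt_of_le hp₀ hpp0
  have hp1 : (1:ℝ) < p := lt_of_le_of_lt hM1 hp
  have hp0 : (0:ℝ) < p := by linarith
  set Np : ℝ := (∫ z in B, ‖fderiv ℝ u z‖ ^ p) ^ (1/p) with hNpdef
  have hNpnn : 0 ≤ Np := Real.rpow_nonneg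
    (setIntegral_nonneg measurableSet_ball fun y _ => Real.rpow_nonneg (norm_nonneg _) p) _
  set K : ℝ := ω⁻¹ * 2 * (p₀ / (p₀ - (M:ℝ))) * (max ω 1 * Np) with hKdef
  have hKnn : 0 ≤ K := by positivity
  have hωe : ω ^ (1 - 1/p) ≤ max ω 1 := by
    apply rpow_le_max hωpos
    · have : 1/p ≤ 1 := by
        rw [div_le_one hp0]; linarith
      linarith
    · have : 0 < 1/p := by positivity
      linarith
  have hpt : ∀ z ∈ B, ‖u z - ω⁻¹ • ∫ w in B, u w‖ ≤ K := by
    intro z hz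
    calc ‖u z - ω⁻¹ • ∫ w in B, u w‖
        ≤ ω⁻¹ * 2 * (p / (p - (M:ℝ))) * (ω ^ (1 - 1/p) * Np) :=
          pointwise_bound hM hp u hu hz
      _ ≤ K := by
          rw [hKdef]
          have h1 : p / (p - (M:ℝ)) ≤ p₀ / (p₀ - (M:ℝ)) := ratio_mono hp₀ hpp0 hMpos
          have h2 : ω ^ (1 - 1/p) * Np ≤ max ω 1 * Np :=
            mul_le_mul_of_nonneg_right hωe hNpnn
          have hnn1 : 0 ≤ ω⁻¹ * 2 := by positivity
          have hnn2 : 0 ≤ p / (p - (M:ℝ)) := div_nonneg hp0.le (by linarith)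
          calc ω⁻¹ * 2 * (p / (p - (M:ℝ))) * (ω ^ (1 - 1/p) * Np)
              ≤ ω⁻¹ * 2 * (p₀ / (p₀ - (M:ℝ))) * (ω ^ (1 - 1/p) * Np) := by
                apply mul_le_mul_of_nonneg_right _ (by positivity)
                exact mul_le_mul_of_nonneg_left h1 hnn1
            _ ≤ ω⁻¹ * 2 * (p₀ / (p₀ - (M:ℝ))) * (max ω 1 * Np) :=
                mul_le_mul_of_nonneg_left h2 (by positivity)
  have hint : IntegrableOn (fun z => ‖u z - ω⁻¹ • ∫ w in B, u w‖ ^ p) B volume := by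
    have hc : Continuous fun z => ‖u z - ω⁻¹ • ∫ w in B, u w‖ ^ p :=
      ((hu.continuous.sub continuous_const).norm).rpow_const fun x => Or.inr hp0.le
    exact (hc.continuousOn.integrableOn_compact (isCompact_closedBall _ _)).mono_set
      ball_subset_closedBall
  have hbound : ∫ z in B, ‖u z - ω⁻¹ • ∫ w in B, u w‖ ^ p ≤ ω * K ^ p := by
    have h1 : ∫ z in B, ‖u z - ω⁻¹ • ∫ w in B, u w‖ ^ p ≤ ∫ _z in B, K ^ p := by
      apply setIntegral_mono_on hint (integrableOn_const measure_ball_lt_top.ne)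
        measurableSet_ball
      intro z hz
      exact Real.rpow_le_rpow (norm_nonneg _) (hpt z hz) hp0.le
    calc ∫ z in B, ‖u z - ω⁻¹ • ∫ w in B, u w‖ ^ p ≤ ∫ _z in B, K ^ p := h1
      _ = ω * K ^ p := by rw [setIntegral_const, smul_eq_mul, measureReal_def]
  have hLnn : 0 ≤ ∫ z in B, ‖u z - ω⁻¹ • ∫ w in B, u w‖ ^ p :=
    setIntegral_nonneg measurableSet_ball fun z _ => Real.rpow_nonneg (norm_nonneg _) p
  calc (∫ z in B, ‖u z - ω⁻¹ • ∫ w in B, u w‖ ^ p) ^ (1/p)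
      ≤ (ω * K ^ p) ^ (1/p) := Real.rpow_le_rpow hLnn hbound (by positivity)
    _ = ω ^ (1/p) * K := by
        rw [Real.mul_rpow hωpos.le (Real.rpow_nonneg hKnn p),
          ← Real.rpow_mul hKnn, mul_one_div_cancel hp0.ne', Real.rpow_one]
    _ ≤ max ω 1 * K := by
        apply mul_le_mul_of_nonneg_right _ hKnn
        apply rpow_le_max hωpos (by positivity)
        rw [div_le_one hp0]; linarith
    _ = max ω 1 * (ω⁻¹ * 2 * (p₀ / (p₀ - (M:ℝ))) * max ω 1) * Np := by
        rw [hKdef]; ring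
end
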